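/- arXiv:1412.5849 — 5 statements merged into one kernel-verified Lean document; each statement's English description precedes it below -/
import Mathlib

section
/- For every odd positive integer n, the rainbow connection number of the power graph of the direct product Q_8 × ℤ_n of the quaternion group of order 8 with the cyclic group of order n equals 2. -/
/-- The power graph of a group `G`: distinct elements `x` and `y` are adjacent
iff one is a power of the other. -/
def powerGraph (G : Type*) [Group G] : SimpleGraph G where
  Adj x y := x ≠ y ∧ (x ∈ Subgroup.zpowers y ∨ y ∈ Subgroup.zpowers x)
  symm := ⟨fun x y h => ⟨h.1.symm, h.2.symm⟩⟩
  loopless := ⟨fun x h => h.1 rfl⟩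

/-- `ζ` is a rainbow `k`-coloring of `Γ`: every pair of vertices is joined by a
path whose edges receive pairwise distinct colors. -/
def IsRainbowColoring {V : Type*} (Γ : SimpleGraph V) {k : ℕ} (ζ : Sym2 V → Fin k) : Prop :=
  ∀ u v : V, ∃ p : Γ.Walk u v, p.IsPath ∧ (p.edges.map ζ).Nodup

/-- The rainbow connection number of `Γ`: the least `k` admitting a rainbow
`k`-coloring. -/
noncomputable def rainbowConnection {V : Type*} (Γ : SimpleGraph V) : ℕ :=
  sInf {k : ℕ | ∃ ζ : Sym2 V → Fin k, IsRainbowColoring Γ ζ}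

/-- An element `x` is a maximal involution if it has order 2 and the only
cyclic subgroup containing `x` is `⟨x⟩`. -/
def IsMaximalInvolution {G : Type*} [Group G] (x : G) : Prop :=
  orderOf x = 2 ∧ ∀ g : G, x ∈ Subgroup.zpowers g → Subgroup.zpowers g = Subgroup.zpowers x

namespace RCaux

open QuaternionGroup Subgroup

abbrev Q := QuaternionGroup 2
abbrev C (n : ℕ) := Multiplicative (ZMod n)
abbrev V (n : ℕ) := Q × C n

def zQ : Q := a 2

lemma qpow4 : ∀ g : Q, g ^ 4 = 1 := by decide

lemma zq_sq : zQ * zQ = 1 := by decide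

def isJ (g : Q) : Bool := decide (g = xa 0 ∨ g = xa 2)
def isK (g : Q) : Bool := decide (g = xa 1 ∨ g = xa 3)

def qbit (g : Q) : ℕ := if g = a 3 ∨ g = xa 2 ∨ g = xa 3 then 1 else 0

def nu {n : ℕ} (y : V n) : ℕ := 2 * Nat.log 2 (Multiplicative.toAdd y.2).val + qbit y.1

def zV (n : ℕ) : V n := (zQ, 1)

noncomputable def col {n : ℕ} (x y : V n) : Fin 2 :=
  if x = 1 ∨ y = 1 then (if isK x.1 || isK y.1 then 1 else 0)
  else if x = zV n ∨ y = zV n then (if isJ x.1 || isJ y.1 then 1 else 0)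
  else if orderOf x < orderOf y then (if Nat.testBit (orderOf x) (nu y) then 1 else 0)
  else if orderOf y < orderOf x then (if Nat.testBit (orderOf y) (nu x) then 1 else 0)
  else 0

lemma col_symm {n : ℕ} (x y : V n) : col x y = col y x := by
  unfold col
  simp only [or_comm (a := x = 1), or_comm (a := x = zV n), Bool.or_comm (isK x.1),
    Bool.or_comm (isJ x.1)]
  split_ifs <;> first | rfl | (exfalso; omega)

noncomputable def zeta (n : ℕ) : Sym2 (V n) → Fin 2 := Sym2.lift ⟨col, col_symm⟩

@[simp] lemma zeta_mk {n : ℕ} (x y : V n) : zeta n s(x, y) = col x y := rfl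


section Helpers

variable {n : ℕ}

lemma odd_of_dvd {d m : ℕ} (h : d ∣ m) (hm : Odd m) : Odd d := hm.of_dvd_nat h

lemma ord_q_dvd_four (g : Q) : orderOf g ∣ 4 := orderOf_dvd_of_pow_eq_one (qpow4 g)

lemma c_pow_n (c : C n) : c ^ n = 1 := by
  have : n • (Multiplicative.toAdd c) = 0 := by
    rw [nsmul_eq_mul, ZMod.natCast_self, zero_mul]
  have h2 := congrArg Multiplicative.ofAdd this
  rw [ofAdd_nsmul, ofAdd_toAdd, ofAdd_zero] at h2
  exact h2

lemma ord_c_dvd (c : C n) : orderOf c ∣ n := orderOf_dvd_of_pow_eq_one (c_pow_n c)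

lemma ord_c_odd (hodd : Odd n) (c : C n) : Odd (orderOf c) :=
  odd_of_dvd (ord_c_dvd c) hodd

lemma cop (hodd : Odd n) (u : V n) : Nat.Coprime (orderOf u.1) (orderOf u.2) := by
  have h4 : Nat.Coprime 4 (orderOf u.2) := by
    have : Nat.Coprime 2 (orderOf u.2) := Nat.coprime_two_left.mpr (ord_c_odd hodd u.2)
    simpa using this.pow_left 2
  exact Nat.Coprime.coprime_dvd_left (ord_q_dvd_four u.1) h4

lemma ordProd (hodd : Odd n) (u : V n) : orderOf u = orderOf u.1 * orderOf u.2 := by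
  rw [Prod.orderOf, Nat.Coprime.lcm_eq_mul (cop hodd u)]

lemma ord_dvd_4n (hodd : Odd n) (u : V n) : orderOf u ∣ 4 * n := by
  rw [ordProd hodd u]
  exact mul_dvd_mul (ord_q_dvd_four u.1) (ord_c_dvd u.2)

lemma mem_of_parts (hodd : Odd n) (w u : V n) (s t : ℕ)
    (h1 : w.1 ^ s = u.1) (h2 : w.2 ^ t = u.2) : u ∈ Subgroup.zpowers w := by
  obtain ⟨k, hk1, hk2⟩ := Nat.chineseRemainder (cop hodd w) s t
  refine Subgroup.mem_zpowers_iff.mpr ⟨(k : ℤ), ?_⟩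
  rw [zpow_natCast]
  ext
  · rw [Prod.pow_fst, ← h1]
    exact pow_eq_pow_iff_modEq.mpr hk1
  · rw [Prod.pow_snd, ← h2]
    exact pow_eq_pow_iff_modEq.mpr hk2

end Helpers

def CQ : List Q := [a 1, xa 0, xa 1]


lemma qsplit : ∀ g h : Q,
    (∃ q ∈ CQ, (∃ s < 4, q ^ s = g) ∧ (∃ s < 4, q ^ s = h)) ∨
    (isK g ≠ isK h) ∨ (isJ g ≠ isJ h ∧ g ^ 2 = zQ ∧ h ^ 2 = zQ) := by decide

lemma Dcomp : ∀ q g h : Q, (∃ s < 4, q ^ s = g) → (∃ s < 4, q ^ s = h) →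
    (∃ c < 4, g ^ c = h) ∨ (∃ c < 4, h ^ c = g) := by decide

lemma D2 : ∀ q g h : Q, (∃ s < 4, q ^ s = g) → (∃ s < 4, q ^ s = h) →
    g ^ 2 = zQ → ∃ c < 4, g ^ c = h := by decide

lemma D3 : ∀ q g h : Q, (∃ s < 4, q ^ s = g) → (∃ s < 4, q ^ s = h) →
    ((g = 1) ↔ (h = 1)) → ((g ^ 2 = 1) ↔ (h ^ 2 = 1)) → ∃ c < 4, g ^ c = h := by decide

lemma CQfacts : ∀ q ∈ CQ, q ^ 2 = zQ ∧ q⁻¹ = q ^ 3 ∧ qbit q = 0 ∧ qbit q⁻¹ = 1 ∧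
    q ≠ 1 ∧ q ≠ zQ ∧ q⁻¹ ≠ 1 ∧ q⁻¹ ≠ zQ := by decide

lemma zq_facts : zQ ≠ 1 ∧ zQ ^ 2 = 1 ∧ isJ zQ = false ∧ isK zQ = false ∧
    isJ (1 : Q) = false ∧ isK (1 : Q) = false := by decide



lemma zmem {n : ℕ} (hn : n ≠ 0) (x y : ZMod n) (h : addOrderOf y ∣ addOrderOf x) :
    ∃ t : ℕ, t • x = y := by
  haveI : NeZero n := ⟨hn⟩
  have hx : ((x.val : ℕ) : ZMod n) = x := by rw [ZMod.natCast_val, ZMod.cast_id]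
  have hy : ((y.val : ℕ) : ZMod n) = y := by rw [ZMod.natCast_val, ZMod.cast_id]
  set g := n.gcd x.val with hg
  set g' := n.gcd y.val with hg'
  have hgx : addOrderOf x = n / g := by rw [← hx, ZMod.addOrderOf_coe _ hn]
  have hgy : addOrderOf y = n / g' := by rw [← hy, ZMod.addOrderOf_coe _ hn]
  have hgn : g ∣ n := Nat.gcd_dvd_left _ _
  have hg'n : g' ∣ n := Nat.gcd_dvd_left _ _
  have hgpos : 0 < g := Nat.gcd_pos_of_pos_left _ (Nat.pos_of_ne_zero hn)
  have hdvd : n / g' ∣ n / g := by rw [← hgx, ← hgy]; exact h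
  obtain ⟨m, hm⟩ := hdvd
  have hq : 0 < n / g' := Nat.div_pos (Nat.le_of_dvd (Nat.pos_of_ne_zero hn) hg'n)
    (Nat.gcd_pos_of_pos_left _ (Nat.pos_of_ne_zero hn))
  have hne : (n / g') * g' = n := Nat.div_mul_cancel hg'n
  have hne2 : (n / g) * g = n := Nat.div_mul_cancel hgn
  have key : g' = m * g := by
    have h2 : (n / g') * g' = (n / g') * (m * g) := by
      conv_lhs => rw [hne, ← hne2, hm]
      rw [mul_assoc]
    exact Nat.eq_of_mul_eq_mul_left hq h2
  have hgg' : g ∣ g' := ⟨m, by rw [key, mul_comm]⟩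
  have hgyval : g ∣ y.val := hgg'.trans (Nat.gcd_dvd_right _ _)
  have hgxval : g ∣ x.val := Nat.gcd_dvd_right _ _
  have hcop : Nat.Coprime (x.val / g) (n / g) :=
    (Nat.coprime_div_gcd_div_gcd (m := n) (n := x.val) hgpos).symm
  rcases Nat.lt_or_ge 1 (n / g) with hbig | hsmall
  · obtain ⟨m', -, hm'⟩ := Nat.exists_mul_mod_eq_one_of_coprime hcop hbig
    refine ⟨m' * (y.val / g), ?_⟩
    have step : (x.val / g) * m' ≡ 1 [MOD n / g] := by
      unfold Nat.ModEq
      rw [hm', Nat.mod_eq_of_lt hbig]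
    have step2 : (x.val / g) * m' * (y.val / g) ≡ y.val / g [MOD n / g] := by
      simpa using step.mul_right (y.val / g)
    have step3 : (x.val / g) * m' * (y.val / g) * g ≡ (y.val / g) * g [MOD (n / g) * g] :=
      step2.mul_right' g
    rw [hne2, Nat.div_mul_cancel hgyval] at step3
    obtain ⟨x1, hx1⟩ := hgxval
    have hxd : x.val / g = x1 := by rw [hx1]; exact Nat.mul_div_cancel_left _ hgpos
    have harith : m' * (y.val / g) * x.val = (x.val / g) * m' * (y.val / g) * g := by
      rw [hxd, hx1]; ring
    have final : m' * (y.val / g) * x.val ≡ y.val [MOD n] := by rw [harith]; exact step3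
    rw [nsmul_eq_mul]
    conv_lhs => rw [← hx]
    rw [← Nat.cast_mul]
    conv_rhs => rw [← hy]
    exact (ZMod.natCast_eq_natCast_iff _ _ _).mpr final
  · have hone : n / g = 1 :=
      le_antisymm hsmall (Nat.div_pos (Nat.le_of_dvd (Nat.pos_of_ne_zero hn) hgn) hgpos)
    have hone' : n / g' = 1 := by
      have := Nat.le_of_dvd Nat.one_pos (hone ▸ (⟨m, hm⟩ : n / g' ∣ n / g))
      omega
    have hg'eq : g' = n := by
      have := hne; rw [hone', one_mul] at this; exact this
    have hyval : y.val = 0 := by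
      have hdv : n ∣ y.val := by
        have h0 : g' ∣ y.val := Nat.gcd_dvd_right n y.val
        rwa [hg'eq] at h0
      rcases Nat.eq_zero_of_dvd_of_lt hdv (ZMod.val_lt y) with h
      · exact h
    refine ⟨0, ?_⟩
    rw [zero_smul, ← hy, hyval, Nat.cast_zero]

lemma zmemC {n : ℕ} (hn : n ≠ 0) (x y : C n) (h : orderOf y ∣ orderOf x) :
    ∃ t : ℕ, x ^ t = y := by
  obtain ⟨t, ht⟩ := zmem hn (Multiplicative.toAdd x) (Multiplicative.toAdd y) h
  refine ⟨t, ?_⟩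
  have h2 := congrArg Multiplicative.ofAdd ht
  rwa [ofAdd_nsmul, ofAdd_toAdd, ofAdd_toAdd] at h2

lemma ord_zQ : orderOf zQ = 2 := by
  have h1 : zQ ^ 2 = 1 := zq_facts.2.1
  have h2 : zQ ≠ 1 := zq_facts.1
  exact orderOf_eq_prime h1 h2

lemma ord_CQ : ∀ q ∈ CQ, orderOf q = 4 := by
  intro q hq
  fin_cases hq
  · exact (QuaternionGroup.orderOf_a_one (n := 2))
  · exact QuaternionGroup.orderOf_xa 0
  · exact QuaternionGroup.orderOf_xa 1

lemma ord_ofAdd_pow2 {n : ℕ} (hodd : Odd n) (hn : n ≠ 0) (j : ℕ) :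
    orderOf (Multiplicative.ofAdd (((2 ^ j : ℕ) : ZMod n))) = n := by
  have h1 : orderOf (Multiplicative.ofAdd (((2 ^ j : ℕ) : ZMod n)))
      = addOrderOf (((2 ^ j : ℕ) : ZMod n)) := rfl
  rw [h1, ZMod.addOrderOf_coe _ hn]
  have hco : Nat.Coprime n (2 ^ j) := (Nat.coprime_two_right.mpr hodd).pow_right j
  rw [hco, Nat.div_one]

lemma bitdiff {a b K : ℕ} (hne : a ≠ b) (ha : a < 2 ^ K) (hb : b < 2 ^ K) :
    ∃ t < K, Nat.testBit a t ≠ Nat.testBit b t := by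
  by_contra hcon
  push_neg at hcon
  refine hne (Nat.eq_of_testBit_eq fun i => ?_)
  rcases Nat.lt_or_ge i K with h | h
  · exact hcon i h
  · have hpow : (2:ℕ) ^ K ≤ 2 ^ i := Nat.pow_le_pow_right (by norm_num) h
    rw [Nat.testBit_eq_false_of_lt (lt_of_lt_of_le ha hpow),
      Nat.testBit_eq_false_of_lt (lt_of_lt_of_le hb hpow)]

lemma zeta_one_edge {n : ℕ} (v : V n) : zeta n s(1, v) = if isK v.1 then 1 else 0 := by
  rw [zeta_mk]
  unfold col
  rw [if_pos (Or.inl rfl)]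
  have : isK (1 : V n).1 = false := zq_facts.2.2.2.2.2
  rw [this, Bool.false_or]

lemma zeta_z_edge {n : ℕ} (v : V n) (h1 : v ≠ 1) :
    zeta n s(zV n, v) = if isJ v.1 then 1 else 0 := by
  rw [zeta_mk]
  unfold col
  have hz1 : zV n ≠ (1 : V n) := by
    intro h
    exact zq_facts.1 (congrArg Prod.fst h)
  rw [if_neg (by tauto), if_pos (Or.inl rfl)]
  have : isJ (zV n).1 = false := zq_facts.2.2.1
  rw [this, Bool.false_or]

lemma zeta_ord_edge {n : ℕ} (u w : V n) (hu1 : u ≠ 1) (hw1 : w ≠ 1)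
    (huz : u ≠ zV n) (hwz : w ≠ zV n) (hlt : orderOf u < orderOf w) :
    zeta n s(u, w) = if Nat.testBit (orderOf u) (nu w) then 1 else 0 := by
  rw [zeta_mk]
  unfold col
  rw [if_neg (by tauto), if_neg (by tauto), if_pos hlt]

lemma CQfacts2 : ∀ q ∈ CQ, (q⁻¹) ^ 3 = q ∧ (q⁻¹) ^ 2 = zQ ∧ q ^ 2 = zQ := by decide

lemma Dsq : ∀ q ∈ CQ, ∀ g : Q, (∃ s < 4, q ^ s = g) → g ^ 2 = 1 ∨ g ^ 2 = zQ := by decide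

lemma qtrich : ∀ g : Q, g = 1 ∨ g = zQ ∨ g ^ 2 = zQ := by decide

lemma isJxa : isJ (xa 0) = true ∧ isJ ((xa 0)⁻¹) = true := by decide

lemma xa0CQ : xa 0 ∈ CQ := by decide

def wmid (n : ℕ) (q : Q) (t0 : ℕ) : V n :=
  ((if t0 % 2 = 1 then q⁻¹ else q), Multiplicative.ofAdd (((2 ^ (t0 / 2) : ℕ) : ZMod n)))

lemma wmid_fst_ne {n : ℕ} (q : Q) (hq : q ∈ CQ) (t0 : ℕ) :
    (wmid n q t0).1 ≠ 1 ∧ (wmid n q t0).1 ≠ zQ := by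
  obtain ⟨-, -, -, -, h1, h2, h3, h4⟩ := CQfacts q hq
  unfold wmid
  dsimp only
  split_ifs <;> exact ⟨by assumption, by assumption⟩

lemma wmid_ne_one {n : ℕ} (q : Q) (hq : q ∈ CQ) (t0 : ℕ) : wmid n q t0 ≠ 1 := by
  intro h
  exact (wmid_fst_ne q hq t0).1 (congrArg Prod.fst h)

lemma wmid_ne_zV {n : ℕ} (q : Q) (hq : q ∈ CQ) (t0 : ℕ) : wmid n q t0 ≠ zV n := by
  intro h
  exact (wmid_fst_ne q hq t0).2 (congrArg Prod.fst h)

lemma wmid_sq {n : ℕ} (q : Q) (hq : q ∈ CQ) (t0 : ℕ) : (wmid n q t0).1 ^ 2 = zQ := by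
  obtain ⟨-, h2, h3⟩ := CQfacts2 q hq
  unfold wmid
  dsimp only
  split_ifs <;> assumption

lemma wmid_ord {n : ℕ} (hodd : Odd n) (hn : n ≠ 0) (q : Q) (hq : q ∈ CQ) (t0 : ℕ) :
    orderOf (wmid n q t0) = 4 * n := by
  rw [ordProd hodd]
  have h2 : orderOf (wmid n q t0).2 = n := ord_ofAdd_pow2 hodd hn _
  have h1 : orderOf (wmid n q t0).1 = 4 := by
    unfold wmid
    dsimp only
    split_ifs
    · rw [orderOf_inv]; exact ord_CQ q hq
    · exact ord_CQ q hq
  rw [h1, h2]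

lemma wmid_nu {n : ℕ} (q : Q) (hq : q ∈ CQ) (t0 : ℕ) (hj : 2 ^ (t0 / 2) < n) :
    nu (wmid n q t0) = t0 := by
  obtain ⟨-, -, hb0, hb1, -⟩ := CQfacts q hq
  unfold nu wmid
  dsimp only
  rw [toAdd_ofAdd, ZMod.val_natCast_of_lt hj, Nat.log_pow (by norm_num)]
  split_ifs with h
  · rw [hb1]; omega
  · rw [hb0]; omega

lemma mem_wmid {n : ℕ} (hodd : Odd n) (hn : n ≠ 0) (q : Q) (hq : q ∈ CQ) (t0 : ℕ)
    (u : V n) (s : ℕ) (hs : q ^ s = u.1) : u ∈ Subgroup.zpowers (wmid n q t0) := by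
  have hq3 : (q⁻¹) ^ 3 = q := (CQfacts2 q hq).1
  have hsnd : ∃ t : ℕ, (wmid n q t0).2 ^ t = u.2 := by
    apply zmemC hn
    rw [show orderOf (wmid n q t0).2 = n from ord_ofAdd_pow2 hodd hn _]
    exact ord_c_dvd u.2
  obtain ⟨t, ht⟩ := hsnd
  by_cases hpar : t0 % 2 = 1
  · refine mem_of_parts hodd _ _ (3 * s) t ?_ ht
    show (if t0 % 2 = 1 then q⁻¹ else q) ^ (3 * s) = u.1
    rw [if_pos hpar, pow_mul, hq3, hs]
  · refine mem_of_parts hodd _ _ s t ?_ ht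
    show (if t0 % 2 = 1 then q⁻¹ else q) ^ s = u.1
    rw [if_neg hpar, hs]

lemma boolif : ∀ a b : Bool, a ≠ b → (if a then (1 : Fin 2) else 0) ≠ (if b then 1 else 0) := by
  decide

lemma zq_odd_pow {m : ℕ} (hm : Odd m) : zQ ^ m = zQ := by
  obtain ⟨k, hk⟩ := hm
  rw [hk, pow_add, pow_mul, zq_facts.2.1, one_pow, one_mul, pow_one]

lemma zmem_of_sq {n : ℕ} (hodd : Odd n) (x : V n) (h : x.1 ^ 2 = zQ) :
    zV n ∈ Subgroup.zpowers x := by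
  refine Subgroup.mem_zpowers_iff.mpr ⟨((2 * orderOf x.2 : ℕ) : ℤ), ?_⟩
  rw [zpow_natCast]
  have hfst : x.1 ^ (2 * orderOf x.2) = zQ := by
    rw [pow_mul, h]
    exact zq_odd_pow (ord_c_odd hodd x.2)
  have hsnd : x.2 ^ (2 * orderOf x.2) = 1 := by
    rw [mul_comm, pow_mul, pow_orderOf_eq_one, one_pow]
  exact Prod.ext (by rw [Prod.pow_fst, hfst]; rfl) (by rw [Prod.pow_snd, hsnd]; rfl)

lemma zmem_of_z {n : ℕ} (hodd : Odd n) (x : V n) (h : x.1 = zQ) :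
    zV n ∈ Subgroup.zpowers x := by
  refine Subgroup.mem_zpowers_iff.mpr ⟨((orderOf x.2 : ℕ) : ℤ), ?_⟩
  rw [zpow_natCast]
  have hfst : x.1 ^ (orderOf x.2) = zQ := by
    rw [h]; exact zq_odd_pow (ord_c_odd hodd x.2)
  exact Prod.ext (by rw [Prod.pow_fst, hfst]; rfl)
    (by rw [Prod.pow_snd, pow_orderOf_eq_one]; rfl)

lemma mid_aux {n : ℕ} (hodd : Odd n) (hpos : 0 < n) (u v : V n) (hne : u ≠ v)
    (hnadj : ¬ (powerGraph (V n)).Adj u v) (hu1 : u ≠ 1) (hv1 : v ≠ 1) (hvz : v ≠ zV n) :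
    ∃ w : V n, w ≠ u ∧ w ≠ v ∧ (powerGraph (V n)).Adj u w ∧ (powerGraph (V n)).Adj w v ∧
      zeta n s(u, w) ≠ zeta n s(w, v) := by
  have hn0 : n ≠ 0 := hpos.ne'
  by_cases huz : u = zV n
  · -- CASE A
    subst huz
    rcases qtrich v.1 with hv | hv | hv
    · -- v.1 = 1 : build middle
      have hb : v.2 ≠ 1 := by
        intro h
        exact hv1 (Prod.ext hv h)
      have hn1 : n ≠ 1 := by
        rintro rfl
        exact hb (Multiplicative.toAdd.injective (Subsingleton.elim _ _))
      have hn3 : 3 ≤ n := by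
        have := Nat.odd_iff.mp hodd
        omega
      set L := Nat.log 2 n with hL
      set t0 := L + 1 with ht0
      have hL1 : 1 ≤ L := Nat.log_pos (by norm_num) (by omega)
      have h2L : 2 ^ L ≤ n := Nat.pow_log_le_self 2 (by omega)
      have h2Lne : 2 ^ L ≠ n := by
        intro heq
        have h2 : (2 : ℕ) ∣ n := heq ▸ dvd_pow_self 2 (by omega)
        obtain ⟨c, hc⟩ := h2
        have := Nat.odd_iff.mp hodd
        omega
      have hj : 2 ^ (t0 / 2) < n := by
        calc 2 ^ (t0 / 2) ≤ 2 ^ L := Nat.pow_le_pow_right (by norm_num) (by omega)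
          _ < n := lt_of_le_of_ne h2L h2Lne
      set w := wmid n (xa 0) t0 with hw
      have hwz := wmid_ne_zV (n := n) (xa 0) xa0CQ t0
      have hw1 := wmid_ne_one (n := n) (xa 0) xa0CQ t0
      have hwv : w ≠ v := by
        intro h
        exact (wmid_fst_ne (n := n) (xa 0) xa0CQ t0).1 (by rw [← hw, h, hv])
      have hmem1 : zV n ∈ Subgroup.zpowers w :=
        zmem_of_sq hodd w (wmid_sq (xa 0) xa0CQ t0)
      have hmem2 : v ∈ Subgroup.zpowers w :=
        mem_wmid hodd hn0 (xa 0) xa0CQ t0 v 0 (by rw [pow_zero, hv])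
      have hadj1 : (powerGraph (V n)).Adj (zV n) w := ⟨Ne.symm hwz, Or.inl hmem1⟩
      have hadj2 : (powerGraph (V n)).Adj w v := ⟨hwv, Or.inr hmem2⟩
      have hordv : orderOf v < orderOf w := by
        rw [wmid_ord hodd hn0 (xa 0) xa0CQ t0, ordProd hodd v, hv, orderOf_one, one_mul]
        have := Nat.le_of_dvd hpos (ord_c_dvd v.2)
        omega
      have c1 : zeta n s(zV n, w) = 1 := by
        rw [zeta_z_edge w hw1]
        have : isJ w.1 = true := by
          rw [hw]
          unfold wmid
          dsimp only
          split_ifs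
          · exact isJxa.2
          · exact isJxa.1
        rw [this]
        rfl
      have c2 : zeta n s(w, v) = 0 := by
        rw [Sym2.eq_swap, zeta_ord_edge v w hv1 hw1 hvz hwz hordv, wmid_nu (xa 0) xa0CQ t0 hj]
        have hvn : orderOf v < 2 ^ t0 := by
          have h1 : orderOf v ≤ n := by
            rw [ordProd hodd v, hv, orderOf_one, one_mul]
            exact Nat.le_of_dvd hpos (ord_c_dvd v.2)
          have h2 : n < 2 ^ t0 := by
            rw [ht0, hL]
            exact Nat.lt_pow_succ_log_self (by norm_num) n
          omega
        rw [Nat.testBit_eq_false_of_lt hvn]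
        rfl
      exact ⟨w, hwz, hwv, hadj1, hadj2, by rw [c1, c2]; decide⟩
    · exact absurd ⟨hne, Or.inl (zmem_of_z hodd v hv)⟩ hnadj
    · exact absurd ⟨hne, Or.inl (zmem_of_sq hodd v hv)⟩ hnadj
  · -- CASE B
    rcases qsplit u.1 v.1 with ⟨q, hq, ⟨s1, hs1lt, hs1⟩, ⟨s2, hs2lt, hs2⟩⟩ | hK | ⟨hJ, hsqu, hsqv⟩
    · -- chain case
      by_cases hn1 : n = 1
      · exfalso
        subst hn1
        have heq2 : u.2 = v.2 := Multiplicative.toAdd.injective (Subsingleton.elim _ _)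
        rcases Dcomp q u.1 v.1 ⟨s1, hs1lt, hs1⟩ ⟨s2, hs2lt, hs2⟩ with ⟨c, -, hc⟩ | ⟨c, -, hc⟩
        · exact hnadj ⟨hne, Or.inr (mem_of_parts hodd u v c 1 hc (by rw [pow_one, heq2]))⟩
        · exact hnadj ⟨hne, Or.inl (mem_of_parts hodd v u c 1 hc (by rw [pow_one, heq2]))⟩
      have hn3 : 3 ≤ n := by
        have := Nat.odd_iff.mp hodd
        omega
      have ordne : ∀ x y : V n, x ≠ y → (∃ s < 4, q ^ s = x.1) → (∃ s < 4, q ^ s = y.1) →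
          ¬ (powerGraph (V n)).Adj x y → orderOf x ≠ 4 * n := by
        intro x y hxy hx hy hnad htop
        have hx4 : orderOf x.1 ∣ 4 := ord_q_dvd_four x.1
        have hx2n : orderOf x.2 ∣ n := ord_c_dvd x.2
        have hprod : orderOf x.1 * orderOf x.2 = 4 * n := by rw [← ordProd hodd]; exact htop
        have hb : orderOf x.2 = n := by
          have h1 : orderOf x.1 ≤ 4 := Nat.le_of_dvd (by norm_num) hx4
          have h2 : orderOf x.2 ≤ n := Nat.le_of_dvd hpos hx2n
          have h3 : 4 * n ≤ 4 * orderOf x.2 := by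
            calc 4 * n = orderOf x.1 * orderOf x.2 := hprod.symm
              _ ≤ 4 * orderOf x.2 := Nat.mul_le_mul_right _ h1
          omega
        have hsq : x.1 ^ 2 = zQ := by
          rcases Dsq q hq x.1 hx with h | h
          · exfalso
            have hdvd := orderOf_dvd_of_pow_eq_one h
            have ha : orderOf x.1 = 4 := by
              rw [hb] at hprod
              exact Nat.eq_of_mul_eq_mul_right hpos hprod
            rw [ha] at hdvd
            exact absurd (Nat.le_of_dvd (by norm_num) hdvd) (by norm_num)
          · exact h
        obtain ⟨c, -, hc⟩ := D2 q x.1 y.1 hx hy hsq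
        obtain ⟨t, ht⟩ := zmemC (hpos.ne') x.2 y.2 (by rw [hb]; exact ord_c_dvd y.2)
        exact hnad ⟨hxy, Or.inr (mem_of_parts hodd x y c t hc ht)⟩
      have hout : orderOf u ≠ 4 * n :=
        ordne u v hne ⟨s1, hs1lt, hs1⟩ ⟨s2, hs2lt, hs2⟩ hnadj
      have hovt : orderOf v ≠ 4 * n :=
        ordne v u hne.symm ⟨s2, hs2lt, hs2⟩ ⟨s1, hs1lt, hs1⟩ (fun h => hnadj h.symm)
      have honeq : orderOf u ≠ orderOf v := by
        intro heq
        have hpos1 : 0 < orderOf v.1 := Nat.pos_of_ne_zero (by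
          intro h0
          have := ord_q_dvd_four v.1
          rw [h0] at this
          exact absurd (Nat.eq_zero_of_zero_dvd this) (by norm_num))
        have ha : orderOf u.1 = orderOf v.1 := by
          have hc1 : Nat.Coprime (orderOf u.1) (orderOf v.2) := cop hodd (u.1, v.2)
          have hc2 : Nat.Coprime (orderOf v.1) (orderOf u.2) := cop hodd (v.1, u.2)
          have h1 : orderOf u.1 ∣ orderOf v.1 := by
            refine hc1.dvd_of_dvd_mul_right ?_
            rw [← ordProd hodd v, ← heq, ordProd hodd u]
            exact dvd_mul_right _ _
          have h2 : orderOf v.1 ∣ orderOf u.1 := by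
            refine hc2.dvd_of_dvd_mul_right ?_
            rw [← ordProd hodd u, heq, ordProd hodd v]
            exact dvd_mul_right _ _
          exact Nat.dvd_antisymm h1 h2
        have hb : orderOf u.2 = orderOf v.2 := by
          have h3 := heq
          rw [ordProd hodd u, ordProd hodd v, ha] at h3
          exact Nat.eq_of_mul_eq_mul_left hpos1 h3
        have hiff1 : (u.1 = 1) ↔ (v.1 = 1) := by
          conv_lhs => rw [← orderOf_eq_one_iff, ha, orderOf_eq_one_iff]
        have hiff2 : (u.1 ^ 2 = 1) ↔ (v.1 ^ 2 = 1) := by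
          conv_lhs => rw [← orderOf_dvd_iff_pow_eq_one, ha, orderOf_dvd_iff_pow_eq_one]
        obtain ⟨c, -, hc⟩ := D3 q u.1 v.1 ⟨s1, hs1lt, hs1⟩ ⟨s2, hs2lt, hs2⟩ hiff1 hiff2
        obtain ⟨t, ht⟩ := zmemC hn0 u.2 v.2 (hb ▸ dvd_rfl)
        exact hnadj ⟨hne, Or.inr (mem_of_parts hodd u v c t hc ht)⟩
      have bnd : ∀ x : V n, orderOf x ≠ 4 * n → orderOf x ≤ 2 * n := by
        intro x hx
        obtain ⟨k, hk⟩ := ord_dvd_4n hodd x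
        have hk1 : k ≠ 1 := by
          intro h
          rw [h, mul_one] at hk
          exact hx hk.symm
        have hk0 : k ≠ 0 := by
          intro h
          rw [h, mul_zero] at hk
          omega
        have h2 : orderOf x * 2 ≤ orderOf x * k := Nat.mul_le_mul_left _ (by omega)
        omega
      have hou2n := bnd u hout
      have hov2n := bnd v hovt
      set K := Nat.log 2 (2 * n) + 1 with hK2
      have h2n : 2 * n < 2 ^ K := Nat.lt_pow_succ_log_self (by norm_num) _
      obtain ⟨t0, ht0K, htb⟩ := bitdiff (K := K) honeq (by omega) (by omega)
      have hj : 2 ^ (t0 / 2) < n := by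
        have h3 : (2 : ℕ) ^ t0 ≤ 2 * n := by
          calc (2:ℕ) ^ t0 ≤ 2 ^ (Nat.log 2 (2 * n)) :=
                Nat.pow_le_pow_right (by norm_num) (by omega)
            _ ≤ 2 * n := Nat.pow_log_le_self 2 (by omega)
        have h4 : ((2:ℕ) ^ (t0 / 2)) ^ 2 ≤ 2 * n := by
          rw [← pow_mul]
          exact le_trans (Nat.pow_le_pow_right (by norm_num) (by omega)) h3
        by_contra hcon
        push_neg at hcon
        have h5 : n ^ 2 ≤ ((2:ℕ) ^ (t0 / 2)) ^ 2 := Nat.pow_le_pow_left hcon 2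
        have h6 : n * n ≤ 2 * n := by
          have := le_trans h5 h4
          rwa [pow_two] at this
        have h7 : n ≤ 2 := Nat.le_of_mul_le_mul_right (by omega) hpos
        omega
      set w := wmid n q t0 with hw
      have hw4n : orderOf w = 4 * n := wmid_ord hodd hn0 q hq t0
      have hwu : w ≠ u := fun h => hout (by rw [← h]; exact hw4n)
      have hwv : w ≠ v := fun h => hovt (by rw [← h]; exact hw4n)
      have hadj1 : (powerGraph (V n)).Adj u w :=
        ⟨hwu.symm, Or.inl (mem_wmid hodd hn0 q hq t0 u s1 hs1)⟩
      have hadj2 : (powerGraph (V n)).Adj w v :=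
        ⟨hwv, Or.inr (mem_wmid hodd hn0 q hq t0 v s2 hs2)⟩
      have hlt1 : orderOf u < orderOf w := by rw [hw4n]; omega
      have hlt2 : orderOf v < orderOf w := by rw [hw4n]; omega
      have c1 : zeta n s(u, w) =
          if Nat.testBit (orderOf u) t0 then 1 else 0 := by
        rw [zeta_ord_edge u w hu1 (wmid_ne_one q hq t0) huz (wmid_ne_zV q hq t0) hlt1,
          wmid_nu q hq t0 hj]
      have c2 : zeta n s(w, v) =
          if Nat.testBit (orderOf v) t0 then 1 else 0 := by
        rw [Sym2.eq_swap,
          zeta_ord_edge v w hv1 (wmid_ne_one q hq t0) hvz (wmid_ne_zV q hq t0) hlt2,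
          wmid_nu q hq t0 hj]
      exact ⟨w, hwu, hwv, hadj1, hadj2, by rw [c1, c2]; exact boolif _ _ htb⟩
    · -- isK differ : middle 1
      refine ⟨1, Ne.symm hu1, Ne.symm hv1, ⟨hu1, Or.inr (Subgroup.one_mem _)⟩,
        ⟨fun h => hv1 h.symm, Or.inl (Subgroup.one_mem _)⟩, ?_⟩
      rw [Sym2.eq_swap (a := u), zeta_one_edge u, zeta_one_edge v]
      exact boolif _ _ hK
    · -- isJ differ : middle zV
      refine ⟨zV n, Ne.symm huz, Ne.symm hvz, ⟨huz, Or.inr (zmem_of_sq hodd u hsqu)⟩,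
        ⟨fun h => hvz h.symm, Or.inl (zmem_of_sq hodd v hsqv)⟩, ?_⟩
      rw [Sym2.eq_swap (a := u), zeta_z_edge u hu1, zeta_z_edge v hv1]
      exact boolif _ _ hJ

lemma exists_mid {n : ℕ} (hodd : Odd n) (hpos : 0 < n) (u v : V n) (hne : u ≠ v)
    (hnadj : ¬ (powerGraph (V n)).Adj u v) :
    ∃ w : V n, w ≠ u ∧ w ≠ v ∧ (powerGraph (V n)).Adj u w ∧ (powerGraph (V n)).Adj w v ∧
      zeta n s(u, w) ≠ zeta n s(w, v) := by
  have hu1 : u ≠ 1 := by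
    rintro rfl
    exact hnadj ⟨hne, Or.inl (Subgroup.one_mem _)⟩
  have hv1 : v ≠ 1 := by
    rintro rfl
    exact hnadj ⟨hne, Or.inr (Subgroup.one_mem _)⟩
  by_cases hvz : v = zV n
  · have huz : u ≠ zV n := fun h => hne (h.trans hvz.symm)
    obtain ⟨w, hw1, hw2, ha1, ha2, hc⟩ :=
      mid_aux hodd hpos v u hne.symm (fun h => hnadj h.symm) hv1 hu1 huz
    refine ⟨w, hw2, hw1, ha2.symm, ha1.symm, ?_⟩
    rw [Sym2.eq_swap (a := u) (b := w), Sym2.eq_swap (a := w) (b := v)]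
    exact Ne.symm hc
  · exact mid_aux hodd hpos u v hne hnadj hu1 hv1 hvz

lemma rainbow {n : ℕ} (hodd : Odd n) (hpos : 0 < n) :
    IsRainbowColoring (powerGraph (V n)) (zeta n) := by
  intro u v
  by_cases he : u = v
  · subst he
    exact ⟨SimpleGraph.Walk.nil, SimpleGraph.Walk.IsPath.nil, by simp⟩
  by_cases hadj : (powerGraph (V n)).Adj u v
  · refine ⟨SimpleGraph.Walk.cons hadj SimpleGraph.Walk.nil, ?_, by simp⟩
    refine SimpleGraph.Walk.IsPath.cons SimpleGraph.Walk.IsPath.nil ?_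
    simp [he]
  · obtain ⟨w, hw1, hw2, ha1, ha2, hc⟩ := exists_mid hodd hpos u v he hadj
    refine ⟨SimpleGraph.Walk.cons ha1 (SimpleGraph.Walk.cons ha2 SimpleGraph.Walk.nil), ?_, ?_⟩
    · refine SimpleGraph.Walk.IsPath.cons
        (SimpleGraph.Walk.IsPath.cons SimpleGraph.Walk.IsPath.nil ?_) ?_
      · simp [hw2]
      · simp [Ne.symm hw1, he]
    · simp only [SimpleGraph.Walk.edges_cons, SimpleGraph.Walk.edges_nil, List.map_cons,
        List.map_nil, List.nodup_cons, List.mem_singleton, List.not_mem_nil,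
        not_false_eq_true, List.nodup_nil, and_true]
      exact hc

lemma nonadj {n : ℕ} (hpos : 0 < n) :
    ¬ (powerGraph (V n)).Adj ((a 1 : Q), 1) ((xa 0 : Q), 1) := by
  haveI : NeZero n := ⟨hpos.ne'⟩
  rintro ⟨hne, hmem | hmem⟩
  · rw [← mem_powers_iff_mem_zpowers] at hmem
    obtain ⟨m, hm⟩ := Submonoid.mem_powers_iff _ _ |>.mp hmem
    have hfst : (xa 0 : Q) ^ m = a 1 := by
      have := congrArg Prod.fst hm
      rwa [Prod.pow_fst] at this
    have hmod : (xa 0 : Q) ^ (m % 4) = a 1 := by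
      have h4 : orderOf (xa 0 : Q) = 4 := QuaternionGroup.orderOf_xa 0
      rw [← h4, pow_mod_orderOf, h4] at *
      rw [h4] at *
      exact hfst
    have hlt : m % 4 = 0 ∨ m % 4 = 1 ∨ m % 4 = 2 ∨ m % 4 = 3 := by omega
    rcases hlt with h | h | h | h <;> rw [h] at hmod <;> exact absurd hmod (by decide)
  · rw [← mem_powers_iff_mem_zpowers] at hmem
    obtain ⟨m, hm⟩ := Submonoid.mem_powers_iff _ _ |>.mp hmem
    have hfst : (a 1 : Q) ^ m = xa 0 := by
      have := congrArg Prod.fst hm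
      rwa [Prod.pow_fst] at this
    rw [QuaternionGroup.a_one_pow] at hfst
    cases hfst

end RCaux


theorem rc_powerGraph_quaternion_mul_cyclic_odd (n : ℕ) (hpos : 0 < n) (hodd : Odd n) :
    rainbowConnection (powerGraph (QuaternionGroup 2 × Multiplicative (ZMod n))) = 2 := by
  classical
  haveI : NeZero n := ⟨hpos.ne'⟩
  have h2S : 2 ∈ {k : ℕ | ∃ ζ : Sym2 (RCaux.V n) → Fin k,
      IsRainbowColoring (powerGraph (RCaux.V n)) ζ} :=
    ⟨RCaux.zeta n, RCaux.rainbow hodd hpos⟩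
  refine le_antisymm (Nat.sInf_le h2S) (le_csInf ⟨2, h2S⟩ ?_)
  rintro k ⟨ζ, hr⟩
  by_contra hlt
  push_neg at hlt
  interval_cases k
  · exact (ζ s(1, 1)).elim0
  · obtain ⟨p, hp, hnd⟩ := hr ((QuaternionGroup.a 1 : RCaux.Q), 1) ((QuaternionGroup.xa 0 : RCaux.Q), 1)
    cases p with
    | cons h q =>
      cases q with
      | nil => exact RCaux.nonadj hpos h
      | cons h2 q2 =>
        simp only [SimpleGraph.Walk.edges_cons, List.map_cons, List.nodup_cons,
          List.mem_cons] at hnd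
        exact hnd.1 (Or.inl (Subsingleton.elim _ _))
end

section
/- For every integer n ≥ 3, the rainbow connection number of the power graph of the generalized quaternion group Q_{4n} of order 4n equals 3. -/
section WalksAux

open SimpleGraph
variable {V : Type*} {Γ : SimpleGraph V} {k : ℕ}

lemma rainbow0 (ζ : Sym2 V → Fin k) (u : V) :
    ∃ p : Γ.Walk u u, p.IsPath ∧ (p.edges.map ζ).Nodup :=
  ⟨Walk.nil, by simp⟩

lemma rainbow1 (ζ : Sym2 V → Fin k) {u v : V} (h : Γ.Adj u v) :
    ∃ p : Γ.Walk u v, p.IsPath ∧ (p.edges.map ζ).Nodup :=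
  ⟨Walk.cons h Walk.nil, by simp [h.ne], by simp⟩

lemma rainbow2 (ζ : Sym2 V → Fin k) {u w v : V}
    (h1 : Γ.Adj u w) (h2 : Γ.Adj w v) (huv : u ≠ v)
    (hc : ζ s(u,w) ≠ ζ s(w,v)) :
    ∃ p : Γ.Walk u v, p.IsPath ∧ (p.edges.map ζ).Nodup :=
  ⟨Walk.cons h1 (Walk.cons h2 Walk.nil),
    by simp [SimpleGraph.Walk.isPath_def, h1.ne, h2.ne, huv], by simp [hc]⟩

lemma rainbow3 (ζ : Sym2 V → Fin k) {u w x v : V}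
    (h1 : Γ.Adj u w) (h2 : Γ.Adj w x) (h3 : Γ.Adj x v)
    (hux : u ≠ x) (huv : u ≠ v) (hwv : w ≠ v)
    (c1 : ζ s(u,w) ≠ ζ s(w,x)) (c2 : ζ s(u,w) ≠ ζ s(x,v)) (c3 : ζ s(w,x) ≠ ζ s(x,v)) :
    ∃ p : Γ.Walk u v, p.IsPath ∧ (p.edges.map ζ).Nodup :=
  ⟨Walk.cons h1 (Walk.cons h2 (Walk.cons h3 Walk.nil)),
    by simp [SimpleGraph.Walk.isPath_def, h1.ne, h2.ne, h3.ne, hux, huv, hwv],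
    by simp [c1, c2, c3]⟩

lemma middle_of_short {u v : V} (ζ : Sym2 V → Fin k) (hk : k ≤ 2)
    (p : Γ.Walk u v) (hnd : (p.edges.map ζ).Nodup)
    (hne : u ≠ v) (hadj : ¬ Γ.Adj u v) :
    ∃ w, Γ.Adj u w ∧ Γ.Adj w v ∧ ζ s(u,w) ≠ ζ s(w,v) := by
  have hlen : p.edges.length ≤ 2 := by
    have := hnd.length_le_card
    simpa using this.trans (by simpa using hk)
  cases p with
  | nil => exact absurd rfl hne
  | cons h q =>
      cases q with
      | nil => exact absurd h hadj
      | cons h' q' =>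
          cases q' with
          | nil =>
              refine ⟨_, h, h', ?_⟩
              simp [List.nodup_cons] at hnd
              tauto
          | cons h'' q'' =>
              exfalso
              simp [SimpleGraph.Walk.edges_cons] at hlen
end WalksAux

namespace RCAux


open QuaternionGroup Subgroup

variable {n : ℕ}

lemma a_pow (i : ZMod (2*n)) (k : ℕ) :
    (a i : QuaternionGroup n) ^ k = a (((k:ℕ) : ZMod (2*n)) * i) := by
  induction k with
  | zero => simp [one_def, -a_zero]
  | succ k ih => rw [pow_succ, ih, a_mul_a]; congr 1; push_cast; ring

lemma a_inv (i : ZMod (2*n)) : (a i : QuaternionGroup n)⁻¹ = a (-i) := rfl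

lemma a_zpow (i : ZMod (2*n)) (k : ℤ) :
    (a i : QuaternionGroup n) ^ k = a (((k:ℤ) : ZMod (2*n)) * i) := by
  cases k with
  | ofNat m => rw [Int.ofNat_eq_coe, zpow_natCast, a_pow]; congr 1; push_cast; ring
  | negSucc m =>
      rw [zpow_negSucc, a_pow, a_inv]
      congr 1
      push_cast
      ring

lemma xa_not_mem_zpowers_a (i j : ZMod (2*n)) : xa j ∉ zpowers (a i) := by
  rintro ⟨k, hk⟩
  have hk' : (a i : QuaternionGroup n) ^ k = xa j := hk
  rw [a_zpow] at hk'
  exact absurd hk' (by simp)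

lemma neg_n : -(n : ZMod (2*n)) = n := by
  have : ((2*n : ℕ) : ZMod (2*n)) = 0 := ZMod.natCast_self _
  push_cast at this
  linear_combination -this

lemma xa_pow3 (j : ZMod (2*n)) : (xa j : QuaternionGroup n) ^ 3 = xa (j + (n : ZMod (2*n))) := by
  have h : (xa j : QuaternionGroup n) ^ 3 = xa j ^ 2 * xa j := pow_succ _ _
  rw [h, xa_sq, a_mul_xa, sub_eq_add_neg, neg_n]

lemma z2 : ((2:ℤ)) = ((2:ℕ):ℤ) := by norm_num
lemma z3 : ((3:ℤ)) = ((3:ℕ):ℤ) := by norm_num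
lemma z4 : ((4:ℤ)) = ((4:ℕ):ℤ) := by norm_num

lemma mem_zpowers_xa_iff (j : ZMod (2*n)) (g : QuaternionGroup n) :
    g ∈ zpowers (xa j) ↔ g = 1 ∨ g = a n ∨ g = xa j ∨ g = xa (j + (n : ZMod (2*n))) := by
  constructor
  · rintro ⟨k, hk⟩
    have hk' : (xa j : QuaternionGroup n) ^ k = g := hk
    clear hk
    have h4 : (xa j : QuaternionGroup n) ^ (4:ℤ) = 1 := by
      rw [z4, zpow_natCast, xa_pow_four]
    obtain ⟨q, r, hr0, hr4, hqr⟩ : ∃ q r : ℤ, 0 ≤ r ∧ r < 4 ∧ k = 4*q + r :=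
      ⟨k / 4, k % 4, Int.emod_nonneg k (by norm_num), Int.emod_lt_of_pos k (by norm_num),
        (Int.mul_ediv_add_emod k 4).symm⟩
    rw [hqr, zpow_add, zpow_mul, h4, one_zpow, one_mul] at hk'
    interval_cases r
    · left; simpa using hk'.symm
    · right; right; left; simpa using hk'.symm
    · right; left
      rw [z2, zpow_natCast, xa_sq] at hk'
      exact hk'.symm
    · right; right; right
      rw [z3, zpow_natCast, xa_pow3] at hk'
      exact hk'.symm
  · rintro (rfl | rfl | rfl | rfl)
    · exact one_mem _
    · exact ⟨2, by show (xa j : QuaternionGroup n)^(2:ℤ) = _; rw [z2, zpow_natCast, xa_sq]⟩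
    · exact ⟨1, by simp⟩
    · exact ⟨3, by show (xa j : QuaternionGroup n)^(3:ℤ) = _; rw [z3, zpow_natCast, xa_pow3]⟩


open QuaternionGroup Subgroup SimpleGraph
variable {n : ℕ}


lemma cast_ne {x y : ℕ} (hx : x < 2*n) (hy : y < 2*n) (hxy : x ≠ y) :
    (x : ZMod (2*n)) ≠ (y : ZMod (2*n)) := by
  intro h
  apply hxy
  have := congrArg ZMod.val h
  rwa [ZMod.val_natCast_of_lt hx, ZMod.val_natCast_of_lt hy] at this

lemma adj_one {g : QuaternionGroup n} (h : g ≠ 1) : (powerGraph _).Adj g 1 :=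
  ⟨h, Or.inr (one_mem _)⟩

lemma not_adj_a_xa {i : ZMod (2*n)} (j : ZMod (2*n)) (hi0 : i ≠ 0)
    (hin : i ≠ (n : ZMod (2*n))) : ¬ (powerGraph _).Adj (a i) (xa j) := by
  rintro ⟨-, h | h⟩
  · rcases (mem_zpowers_xa_iff j _).1 h with h' | h' | h' | h'
    · exact hi0 (by rwa [one_def, a.injEq] at h')
    · exact hin (by rwa [a.injEq] at h')
    · exact absurd h' (by simp)
    · exact absurd h' (by simp)
  · exact xa_not_mem_zpowers_a i j h

lemma adj_xa_an (j : ZMod (2*n)) (hn0 : (n : ZMod (2*n)) ≠ 0) :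
    (powerGraph _).Adj (xa j) (a n) := by
  refine ⟨by simp, Or.inr ?_⟩
  rw [mem_zpowers_xa_iff]
  tauto

lemma neighbors_xa {g : QuaternionGroup n} {j : ZMod (2*n)}
    (h : (powerGraph _).Adj g (xa j)) :
    g = 1 ∨ g = a n ∨ g = xa (j + (n : ZMod (2*n))) := by
  obtain ⟨hne, h | h⟩ := h
  · rcases (mem_zpowers_xa_iff j _).1 h with h' | h' | h' | h' <;> tauto
  · cases g with
    | a i => exact absurd h (xa_not_mem_zpowers_a i j)
    | xa m =>
        rcases (mem_zpowers_xa_iff m _).1 h with h' | h' | h' | h'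
        · exact absurd h' (by simp [one_def, -a_zero])
        · exact absurd h' (by simp)
        · exact absurd h'.symm (by simpa using hne)
        · right; right
          rw [xa.injEq] at h'
          have h2 : (n : ZMod (2*n)) + n = 0 := by
            have h3 := neg_n (n := n)
            linear_combination -h3
          rw [h']
          congr 1
          rw [add_assoc, h2, add_zero]
lemma adj_xa_xa {i j : ZMod (2*n)} (h : (powerGraph _).Adj (xa i) (xa j)) :
    i = j + (n : ZMod (2*n)) := by
  rcases neighbors_xa h with h' | h' | h'
  · exact absurd h' (by simp [one_def, -a_zero])
  · exact absurd h' (by simp)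
  · rwa [xa.injEq] at h'

lemma two_val_cases {i : ZMod (2*n)} (hn' : n ≠ 0) (h : i + i = 0) :
    i = 0 ∨ i = (n : ZMod (2*n)) := by
  haveI : NeZero (2*n) := ⟨by omega⟩
  have h2 : ((2 * i.val : ℕ) : ZMod (2*n)) = 0 := by
    push_cast [ZMod.natCast_zmod_val]
    linear_combination h
  rw [ZMod.natCast_eq_zero_iff] at h2
  obtain ⟨c, hc⟩ := h2
  have hv : i.val < 2 * n := ZMod.val_lt i
  have hc' : i.val = n * c := by
    rw [mul_assoc] at hc
    exact Nat.eq_of_mul_eq_mul_left (by norm_num) hc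
  have : i.val = 0 ∨ i.val = n := by
    rcases Nat.lt_or_ge c 2 with h2 | h2
    · interval_cases c <;> omega
    · have := Nat.mul_le_mul_left n h2
      omega
  rcases this with h' | h'
  · left; rw [← ZMod.natCast_zmod_val i, h', Nat.cast_zero]
  · right; rw [← ZMod.natCast_zmod_val i, h']


open QuaternionGroup Subgroup SimpleGraph
variable {n : ℕ}

def cfun (n : ℕ) : QuaternionGroup n → Fin 3
  | QuaternionGroup.a i => if i.val ≤ n then 0 else 1
  | QuaternionGroup.xa _ => 0

def dfun (n : ℕ) (g : QuaternionGroup n) : Fin 3 := if cfun n g = 0 then 1 else 0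

lemma cfun_val (i : ZMod (2*n)) :
    cfun n (QuaternionGroup.a i) = if i.val ≤ n then 0 else 1 := rfl

lemma cfun_cases (g : QuaternionGroup n) : cfun n g = 0 ∨ cfun n g = 1 := by
  cases g <;> simp only [cfun]
  · split_ifs <;> simp
  · simp

lemma dfun_ne_cfun (g : QuaternionGroup n) : dfun n g ≠ cfun n g := by
  unfold dfun; rcases cfun_cases g with h | h <;> rw [h] <;> simp

lemma cfun_ne_two (g : QuaternionGroup n) : cfun n g ≠ 2 := by
  rcases cfun_cases g with h | h <;> rw [h] <;> decide

lemma dfun_ne_two (g : QuaternionGroup n) : dfun n g ≠ 2 := by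
  unfold dfun; split_ifs <;> decide

def colfun (n : ℕ) : QuaternionGroup n → QuaternionGroup n → Fin 3 := fun x y =>
  if (x = 1 ∧ y = QuaternionGroup.a n) ∨ (y = 1 ∧ x = QuaternionGroup.a n) then 2
  else if x = 1 then cfun n y else if y = 1 then cfun n x
  else if x = QuaternionGroup.a n then dfun n y
  else if y = QuaternionGroup.a n then dfun n x else 2

lemma colfun_symm (x y : QuaternionGroup n) : colfun n x y = colfun n y x := by
  unfold colfun
  split_ifs <;> simp_all

def zeta (n : ℕ) : Sym2 (QuaternionGroup n) → Fin 3 :=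
  Sym2.lift ⟨colfun n, colfun_symm⟩

@[simp] lemma zeta_mk (x y : QuaternionGroup n) : zeta n s(x, y) = colfun n x y := rfl

lemma colfun_one_an (h : (QuaternionGroup.a (n : ZMod (2*n)) : QuaternionGroup n) ≠ 1) :
    colfun n 1 (QuaternionGroup.a n) = 2 := by
  unfold colfun; split_ifs <;> simp_all

lemma colfun_one (v : QuaternionGroup n) (h1 : v ≠ 1) (h2 : v ≠ QuaternionGroup.a n) :
    colfun n 1 v = cfun n v := by
  unfold colfun; split_ifs <;> simp_all

lemma colfun_an (v : QuaternionGroup n) (h1 : v ≠ 1) (h2 : v ≠ QuaternionGroup.a n)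
    (h : (QuaternionGroup.a (n : ZMod (2*n)) : QuaternionGroup n) ≠ 1) :
    colfun n (QuaternionGroup.a n) v = dfun n v := by
  unfold colfun; split_ifs <;> simp_all

lemma colfun_other (x y : QuaternionGroup n) (hx1 : x ≠ 1) (hx2 : x ≠ QuaternionGroup.a n)
    (hy1 : y ≠ 1) (hy2 : y ≠ QuaternionGroup.a n) :
    colfun n x y = 2 := by
  unfold colfun; split_ifs <;> simp_all

lemma c_neg_ne (hnn : n ≠ 0) {i : ZMod (2*n)} (hi0 : i ≠ 0) (hin : i ≠ (n : ZMod (2*n))) :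
    cfun n (QuaternionGroup.a (-i)) ≠ cfun n (QuaternionGroup.a i) := by
  haveI : NeZero (2*n) := ⟨by omega⟩
  haveI : NeZero i := ⟨hi0⟩
  have hneg : (-i).val = 2*n - i.val := ZMod.val_neg_of_ne_zero i
  have hlt : i.val < 2*n := ZMod.val_lt i
  have hv0 : i.val ≠ 0 := by
    intro h; apply hi0; rw [← ZMod.natCast_zmod_val i, h]; simp
  have hvn : i.val ≠ n := by
    intro h; apply hin; rw [← ZMod.natCast_zmod_val i, h]
  rw [cfun_val, cfun_val]
  split_ifs with h1 h2 h2 <;> first | decide | omega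

theorem upper (hn : 3 ≤ n) : IsRainbowColoring (powerGraph (QuaternionGroup n)) (zeta n) := by
  have hnn : n ≠ 0 := by omega
  have hn0 : ((n:ℕ) : ZMod (2*n)) ≠ 0 := by
    have h := cast_ne (n := n) (x := n) (y := 0) (by omega) (by omega) (by omega)
    simpa using h
  have han1 : (a (n : ZMod (2*n)) : QuaternionGroup n) ≠ 1 := by
    rw [one_def]
    simp only [ne_eq, a.injEq]
    exact hn0
  intro u v
  by_cases huv : u = v
  · subst huv; exact rainbow0 _ _
  by_cases hadj : (powerGraph _).Adj u v
  · exact rainbow1 _ hadj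
  have hv1 : v ≠ 1 := by rintro rfl; exact hadj (adj_one huv)
  have hu1 : u ≠ 1 := by rintro rfl; exact hadj ((adj_one (Ne.symm huv)).symm)
  by_cases huan : u = a n
  · subst huan
    refine rainbow2 _ (adj_one han1) ((adj_one hv1).symm) huv ?_
    rw [zeta_mk, zeta_mk, colfun_symm _ 1, colfun_one_an han1,
      colfun_one v hv1 (Ne.symm huv)]
    exact Ne.symm (cfun_ne_two v)
  by_cases hvan : v = a n
  · subst hvan
    refine rainbow2 _ (adj_one hu1) ((adj_one han1).symm) huv ?_
    rw [zeta_mk, zeta_mk, colfun_symm u 1, colfun_one u hu1 huan, colfun_one_an han1]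
    exact cfun_ne_two u
  by_cases hcc : cfun n u = cfun n v
  · by_cases hva : (powerGraph _).Adj v (a n)
    · refine rainbow3 _ (adj_one hu1) ((adj_one han1).symm) hva.symm huan huv (Ne.symm hv1)
        ?_ ?_ ?_
      · rw [zeta_mk, zeta_mk, colfun_symm u 1, colfun_one u hu1 huan, colfun_one_an han1]
        exact cfun_ne_two u
      · rw [zeta_mk, zeta_mk, colfun_symm u 1, colfun_one u hu1 huan,
          colfun_an v hv1 hvan han1, hcc]
        exact Ne.symm (dfun_ne_cfun v)
      · rw [zeta_mk, zeta_mk, colfun_one_an han1, colfun_an v hv1 hvan han1]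
        exact Ne.symm (dfun_ne_two v)
    · by_cases hua : (powerGraph _).Adj u (a n)
      · refine rainbow3 _ hua (adj_one han1) ((adj_one hv1).symm) hu1 huv (Ne.symm hvan)
          ?_ ?_ ?_
        · rw [zeta_mk, zeta_mk, colfun_symm u _, colfun_an u hu1 huan han1,
            colfun_symm _ 1, colfun_one_an han1]
          exact dfun_ne_two u
        · rw [zeta_mk, zeta_mk, colfun_symm u _, colfun_an u hu1 huan han1,
            colfun_one v hv1 hvan, ← hcc]
          exact dfun_ne_cfun u
        · rw [zeta_mk, zeta_mk, colfun_symm _ 1, colfun_one_an han1,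
            colfun_one v hv1 hvan]
          exact Ne.symm (cfun_ne_two v)
      · obtain ⟨i, rfl⟩ : ∃ i, v = a i := by
          cases v with
          | a i => exact ⟨i, rfl⟩
          | xa j => exact absurd (adj_xa_an j hn0) hva
        have hi0 : i ≠ 0 := by
          intro h; apply hv1; rw [h, one_def]
        have hin : i ≠ (n : ZMod (2*n)) := by
          intro h; apply hvan; rw [h]
        have hni1 : (a (-i) : QuaternionGroup n) ≠ 1 := by
          rw [one_def]
          simp only [ne_eq, a.injEq, neg_eq_zero]
          exact hi0
        have hnan : (a (-i) : QuaternionGroup n) ≠ a n := by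
          simp only [ne_eq, a.injEq]
          intro h
          apply hin
          rw [← neg_neg i, h, neg_n]
        have haiv : (powerGraph _).Adj (a (-i)) (a i) := by
          refine ⟨?_, Or.inl ?_⟩
          · simp only [ne_eq, a.injEq]
            intro h
            rcases two_val_cases hnn (by linear_combination -h : i + i = 0) with h' | h'
            · exact hi0 h'
            · exact hin h'
          · have h : (a i : QuaternionGroup n)⁻¹ = a (-i) := a_inv i
            rw [← h]
            exact inv_mem (mem_zpowers _)
        refine rainbow3 _ (adj_one hu1) ((adj_one hni1).symm) haiv
          (by rintro rfl; exact hadj haiv) huv (Ne.symm hv1) ?_ ?_ ?_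
        · rw [zeta_mk, zeta_mk, colfun_symm u 1, colfun_one u hu1 huan,
            colfun_one _ hni1 hnan, hcc]
          exact Ne.symm (c_neg_ne hnn hi0 hin)
        · rw [zeta_mk, zeta_mk, colfun_symm u 1, colfun_one u hu1 huan,
            colfun_other _ _ hni1 hnan hv1 hvan]
          exact cfun_ne_two u
        · rw [zeta_mk, zeta_mk, colfun_one _ hni1 hnan,
            colfun_other _ _ hni1 hnan hv1 hvan]
          exact cfun_ne_two _
  · refine rainbow2 _ (adj_one hu1) ((adj_one hv1).symm) huv ?_
    rw [zeta_mk, zeta_mk, colfun_symm u 1, colfun_one u hu1 huan, colfun_one v hv1 hvan]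
    exact hcc

theorem lower (hn : 3 ≤ n) (ζ : Sym2 (QuaternionGroup n) → Fin 2)
    (hζ : IsRainbowColoring (powerGraph (QuaternionGroup n)) ζ) : False := by
  have hnn : n ≠ 0 := by omega
  haveI : Fact (1 < 2*n) := ⟨by omega⟩
  have hn0 : ((n:ℕ) : ZMod (2*n)) ≠ 0 := by
    have h := cast_ne (n := n) (x := n) (y := 0) (by omega) (by omega) (by omega)
    simpa using h
  have nn0 : (n : ZMod (2*n)) + (n : ZMod (2*n)) = 0 := by
    have h := neg_n (n := n); linear_combination -h
  set F : ZMod (2*n) → Fin 2 × Fin 2 :=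
    fun j => (ζ s(xa j, 1), ζ s(xa j, a (n : ZMod (2*n)))) with hF
  have claim : ∀ (g : QuaternionGroup n) (j : ZMod (2*n)),
      ¬ (powerGraph _).Adj g (xa j) → g ≠ xa j →
      ¬ (powerGraph _).Adj g (xa (j + (n : ZMod (2*n)))) →
      ¬ (powerGraph _).Adj g (a (n : ZMod (2*n))) →
      ζ s(g, 1) = ζ s(xa j, 1) → False := by
    intro g j hadj hne hadj2 hadjan heq1
    obtain ⟨p, hp, hnd⟩ := hζ g (xa j)
    obtain ⟨w, hw1, hw2, hwc⟩ := middle_of_short ζ le_rfl p hnd hne hadj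
    rcases neighbors_xa hw2 with rfl | rfl | rfl
    · apply hwc
      rw [show s(1, xa j) = s(xa j, 1) from Sym2.eq_swap]
      exact heq1
    · exact hadjan hw1
    · exact hadj2 hw1
  have claimP : ∀ (g : QuaternionGroup n) (j : ZMod (2*n)),
      ¬ (powerGraph _).Adj g (xa j) → g ≠ xa j →
      ¬ (powerGraph _).Adj g (xa (j + (n : ZMod (2*n)))) →
      (ζ s(g, 1), ζ s(g, a (n : ZMod (2*n)))) ≠ F j := by
    intro g j hadj hne hadj2 heq
    have heq1 : ζ s(g, 1) = ζ s(xa j, 1) := congrArg Prod.fst heq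
    have heq2 : ζ s(g, a (n : ZMod (2*n))) = ζ s(xa j, a (n : ZMod (2*n))) :=
      congrArg Prod.snd heq
    obtain ⟨p, hp, hnd⟩ := hζ g (xa j)
    obtain ⟨w, hw1, hw2, hwc⟩ := middle_of_short ζ le_rfl p hnd hne hadj
    rcases neighbors_xa hw2 with rfl | rfl | rfl
    · apply hwc
      rw [show s(1, xa j) = s(xa j, 1) from Sym2.eq_swap]
      exact heq1
    · apply hwc
      rw [show s(a (n : ZMod (2*n)), xa j) = s(xa j, a (n : ZMod (2*n))) from Sym2.eq_swap]
      exact heq2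
    · exact hadj2 hw1
  have hFF : ∀ i j : ZMod (2*n), i ≠ j → i ≠ j + (n : ZMod (2*n)) → F i ≠ F j := by
    intro i j h1 h2
    apply claimP (xa i) j
    · intro hadj; exact h2 (adj_xa_xa hadj)
    · simp only [ne_eq, xa.injEq]; exact h1
    · intro hadj
      apply h1
      have h3 := adj_xa_xa hadj
      rwa [add_assoc, nn0, add_zero] at h3
  have h10 : (1 : ZMod (2*n)) ≠ 0 := one_ne_zero
  have h1n : (1 : ZMod (2*n)) ≠ (n : ZMod (2*n)) := by
    intro h
    have h' := congrArg ZMod.val h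
    rw [ZMod.val_one, ZMod.val_natCast_of_lt (by omega)] at h'
    omega
  have hG : ∀ j : ZMod (2*n),
      (ζ s(a 1, 1), ζ s(a 1, a (n : ZMod (2*n)))) ≠ F j := by
    intro j
    apply claimP (a 1) j
    · exact not_adj_a_xa j h10 h1n
    · simp
    · exact not_adj_a_xa _ h10 h1n
  rcases Nat.lt_or_ge n 4 with h4 | h4
  · -- n = 3
    have hn3 : n = 3 := by omega
    subst hn3
    have had23 : ¬ (powerGraph _).Adj (a 2) (a ((3:ℕ) : ZMod (2*3)) : QuaternionGroup 3) := by
      rintro ⟨-, ⟨k, hk⟩ | ⟨k, hk⟩⟩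
      · have hk' : (a ((3:ℕ) : ZMod (2*3)) : QuaternionGroup 3) ^ k = a 2 := hk
        rw [a_zpow, a.injEq] at hk'
        exact (by decide : ∀ m : ZMod (2*3), ¬ m * ((3:ℕ) : ZMod (2*3)) = 2) _ hk'
      · have hk' : (a 2 : QuaternionGroup 3) ^ k = a ((3:ℕ) : ZMod (2*3)) := hk
        rw [a_zpow, a.injEq] at hk'
        exact (by decide : ∀ m : ZMod (2*3), ¬ m * 2 = ((3:ℕ) : ZMod (2*3))) _ hk'
    have hC : ∀ j : ZMod (2*3), ζ s(a 2, 1) ≠ (F j).1 := by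
      intro j heq
      apply claim (a 2) j (not_adj_a_xa j (by decide) (by decide)) (by simp)
        (not_adj_a_xa _ (by decide) (by decide)) had23
      exact heq
    have hcard : ({(ζ s(a 1, 1), ζ s(a 1, a ((3:ℕ) : ZMod (2*3)))), F 0, F 1, F 2} :
        Finset (Fin 2 × Fin 2)).card = 4 := by
      rw [Finset.card_insert_of_notMem (by
          simp only [Finset.mem_insert, Finset.mem_singleton, not_or]
          exact ⟨hG _, hG _, hG _⟩),
        Finset.card_insert_of_notMem (by
          simp only [Finset.mem_insert, Finset.mem_singleton, not_or]
          exact ⟨hFF 0 1 (by decide) (by decide), hFF 0 2 (by decide) (by decide)⟩),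
        Finset.card_insert_of_notMem (by
          simp only [Finset.mem_singleton]
          exact hFF 1 2 (by decide) (by decide)),
        Finset.card_singleton]
    have huniv : ({(ζ s(a 1, 1), ζ s(a 1, a ((3:ℕ) : ZMod (2*3)))), F 0, F 1, F 2} :
        Finset (Fin 2 × Fin 2)) = Finset.univ := by
      apply Finset.eq_univ_of_card
      rw [hcard]
      simp
    have hmem : ∀ b : Fin 2,
        ((ζ s(a 2, 1), b) : Fin 2 × Fin 2) =
          (ζ s(a 1, 1), ζ s(a 1, a ((3:ℕ) : ZMod (2*3)))) := by
      intro b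
      have hb : ((ζ s(a 2, 1), b) : Fin 2 × Fin 2) ∈
          ({(ζ s(a 1, 1), ζ s(a 1, a ((3:ℕ) : ZMod (2*3)))), F 0, F 1, F 2} :
            Finset (Fin 2 × Fin 2)) := by
        rw [huniv]; exact Finset.mem_univ _
      simp only [Finset.mem_insert, Finset.mem_singleton] at hb
      rcases hb with hb | hb | hb | hb
      · exact hb
      · exact absurd (congrArg Prod.fst hb) (hC 0)
      · exact absurd (congrArg Prod.fst hb) (hC 1)
      · exact absurd (congrArg Prod.fst hb) (hC 2)
    have h01 := (hmem 0).trans (hmem 1).symm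
    have := congrArg Prod.snd h01
    simp at this
  · -- n ≥ 4
    have key : ∀ x y : ℕ, x < 4 → y < 4 → x ≠ y →
        F ((x:ℕ) : ZMod (2*n)) ≠ F ((y:ℕ) : ZMod (2*n)) := by
      intro x y hx hy hxy
      apply hFF
      · exact cast_ne (by omega) (by omega) hxy
      · rw [← Nat.cast_add]
        exact cast_ne (by omega) (by omega) (by omega)
    have hcard : ({(ζ s(a 1, 1), ζ s(a 1, a (n : ZMod (2*n)))),
        F ((0:ℕ) : ZMod (2*n)), F ((1:ℕ) : ZMod (2*n)),
        F ((2:ℕ) : ZMod (2*n)), F ((3:ℕ) : ZMod (2*n))} :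
        Finset (Fin 2 × Fin 2)).card = 5 := by
      rw [Finset.card_insert_of_notMem (by
          simp only [Finset.mem_insert, Finset.mem_singleton, not_or]
          exact ⟨hG _, hG _, hG _, hG _⟩),
        Finset.card_insert_of_notMem (by
          simp only [Finset.mem_insert, Finset.mem_singleton, not_or]
          exact ⟨key 0 1 (by omega) (by omega) (by omega),
            key 0 2 (by omega) (by omega) (by omega),
            key 0 3 (by omega) (by omega) (by omega)⟩),
        Finset.card_insert_of_notMem (by
          simp only [Finset.mem_insert, Finset.mem_singleton, not_or]
          exact ⟨key 1 2 (by omega) (by omega) (by omega),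
            key 1 3 (by omega) (by omega) (by omega)⟩),
        Finset.card_insert_of_notMem (by
          simp only [Finset.mem_singleton]
          exact key 2 3 (by omega) (by omega) (by omega)),
        Finset.card_singleton]
    have hle := Finset.card_le_univ ({(ζ s(a 1, 1), ζ s(a 1, a (n : ZMod (2*n)))),
        F ((0:ℕ) : ZMod (2*n)), F ((1:ℕ) : ZMod (2*n)),
        F ((2:ℕ) : ZMod (2*n)), F ((3:ℕ) : ZMod (2*n))} :
        Finset (Fin 2 × Fin 2))
    rw [hcard] at hle
    simp at hle

end RCAux

theorem rc_powerGraph_generalizedQuaternion (n : ℕ) (hn : 3 ≤ n) :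
    rainbowConnection (powerGraph (QuaternionGroup n)) = 3 := by
  have h3 : 3 ∈ {k : ℕ | ∃ ζ : Sym2 (QuaternionGroup n) → Fin k,
      IsRainbowColoring (powerGraph (QuaternionGroup n)) ζ} :=
    ⟨RCAux.zeta n, RCAux.upper hn⟩
  apply le_antisymm
  · exact Nat.sInf_le h3
  · apply le_csInf ⟨3, h3⟩
    intro k hk
    by_contra hlt
    push_neg at hlt
    obtain ⟨ζ, hζ⟩ := hk
    apply RCAux.lower hn (fun e => Fin.castLE (by omega : k ≤ 2) (ζ e))
    intro u v
    obtain ⟨p, hp, hnd⟩ := hζ u v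
    refine ⟨p, hp, ?_⟩
    have hmm : p.edges.map (fun e => Fin.castLE (by omega : k ≤ 2) (ζ e)) =
        (p.edges.map ζ).map (Fin.castLE (by omega : k ≤ 2)) := by
      rw [List.map_map]
      rfl
    rw [hmm]
    exact hnd.map (Fin.castLE_injective _)
end

section
/- Let p < q be distinct primes, n a positive integer with p^{n-1} ≥ q, and let G be a group of order p^n q such that (i) every Sylow p-subgroup of G is cyclic and G has a unique Sylow q-subgroup, and (ii) the intersection of all Sylow p-subgroups of G has order p^{n-1}. Then the rainbow connection number of the power graph Γ_G equals 2. -/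
open Subgroup Pointwise

lemma exists_zpowers_eq {G : Type*} [Group G] {H : Subgroup G} (h : IsCyclic H) :
    ∃ c : G, Subgroup.zpowers c = H := by
  obtain ⟨g, hg⟩ := h.exists_generator
  refine ⟨(g : G), le_antisymm (zpowers_le.mpr g.2) ?_⟩
  intro x hx
  obtain ⟨k, hk⟩ := hg ⟨x, hx⟩
  exact ⟨k, by simpa using congrArg (Subtype.val) hk⟩

lemma isCyclic_of_le {G : Type*} [Group G] {H K : Subgroup G} (h : H ≤ K) (hc : IsCyclic K) :
    IsCyclic H := by
  haveI := hc
  exact isCyclic_of_surjective (Subgroup.subgroupOfEquivOfLe h).toMonoidHom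
    (Subgroup.subgroupOfEquivOfLe h).surjective

lemma mem_zpowers_of_orderOf_dvd {G : Type*} [Group G] [Finite G] {z x y : G}
    (hx : x ∈ zpowers z) (hy : y ∈ zpowers z) (h : orderOf x ∣ orderOf y) :
    x ∈ zpowers y := by
  rw [← mem_powers_iff_mem_zpowers] at hx hy
  obtain ⟨m, rfl⟩ := hx
  obtain ⟨k, rfl⟩ := hy
  set M := orderOf z with hM
  have hM0 : 0 < M := (orderOf_pos z)
  set d := Nat.gcd M k with hd
  have hzd : z ^ d ∈ zpowers (z ^ k) := by
    have hbez : (d : ℤ) = M * Nat.gcdA M k + k * Nat.gcdB M k := Nat.gcd_eq_gcd_ab M k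
    have : (z : G) ^ (d : ℤ) = ((z ^ k) : G) ^ (Nat.gcdB M k) := by
      rw [hbez, zpow_add, zpow_mul, zpow_mul]
      norm_cast
      rw [pow_orderOf_eq_one]
      simp
    refine ⟨Nat.gcdB M k, ?_⟩
    show ((z ^ k : G)) ^ (Nat.gcdB M k) = z ^ d
    rw [← this]; norm_cast
  have hdvd : d ∣ m := by
    have h1 : orderOf (z ^ k) = M / d := by
      rw [orderOf_pow, ← hM, ← hd]
    have h2 : (z ^ m) ^ (M / d) = 1 := by
      rw [← h1]; exact orderOf_dvd_iff_pow_eq_one.mp h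
    rw [← pow_mul, ← orderOf_dvd_iff_pow_eq_one, ← hM] at h2
    have hdM : d ∣ M := Nat.gcd_dvd_left M k
    obtain ⟨e, he⟩ := hdM
    have he0 : 0 < e := by
      rcases Nat.eq_zero_or_pos e with h0 | h0
      · simp [h0] at he; omega
      · exact h0
    have : M / d = e := by
      rw [he]; exact Nat.mul_div_cancel_left e (Nat.gcd_pos_of_pos_left k hM0)
    rw [this, he] at h2
    exact (mul_dvd_mul_iff_right he0.ne').mp h2
  obtain ⟨t, rfl⟩ := hdvd
  show z ^ (d * t) ∈ zpowers (z ^ k)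
  rw [pow_mul]
  exact Subgroup.pow_mem _ hzd t

lemma dvd_or_dvd_of_dvd_prime_pow {p k : ℕ} (hp : p.Prime) {s t : ℕ}
    (hs : s ∣ p ^ k) (ht : t ∣ p ^ k) : s ∣ t ∨ t ∣ s := by
  obtain ⟨i, hi, rfl⟩ := (Nat.dvd_prime_pow hp).mp hs
  obtain ⟨j, hj, rfl⟩ := (Nat.dvd_prime_pow hp).mp ht
  rcases le_total i j with h | h
  · exact Or.inl (pow_dvd_pow p h)
  · exact Or.inr (pow_dvd_pow p h)

theorem rc_powerGraph_eq_two_of_pnq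
    (p q n : ℕ) (hp : p.Prime) (hq : q.Prime) (hpq : p < q) (hn : 0 < n)
    (hineq : q ≤ p ^ (n - 1))
    (G : Type*) [Group G] [Fintype G]
    (hcard : Fintype.card G = p ^ n * q)
    (hcyc : ∀ P : Sylow p G, IsCyclic P)
    (huniq : ∀ Q Q' : Sylow q G, Q = Q')
    (hint : Nat.card ↥(⨅ P : Sylow p G, (P : Subgroup G)) = p ^ (n - 1)) :
    rainbowConnection (powerGraph G) = 2 := by
  classical
  haveI fp : Fact p.Prime := ⟨hp⟩
  haveI fq : Fact q.Prime := ⟨hq⟩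
  have hp2 : 2 ≤ p := hp.two_le
  have hq3 : 2 ≤ q := hq.two_le
  have hpqne : p ≠ q := hpq.ne
  have hn2 : 2 ≤ n := by
    by_contra h
    interval_cases n
    simp at hineq; omega
  have hqlt : q < p ^ (n - 1) := by
    rcases lt_or_eq_of_le hineq with h | h
    · exact h
    · exfalso
      have hpd : p ∣ q := by
        rw [h]
        exact dvd_pow_self p (by omega)
      exact hpqne ((Nat.prime_dvd_prime_iff_eq hp hq).mp hpd)
  have hcard' : Nat.card G = p ^ n * q := by rw [Nat.card_eq_fintype_card, hcard]
  have hqnp : ¬ q ∣ p ^ n := by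
    intro h
    exact hpqne (((Nat.prime_dvd_prime_iff_eq hq hp).mp (hq.dvd_of_dvd_pow h)).symm)
  have hqnp' : ¬ q ∣ p ^ (n-1) := fun h => hqnp (h.trans (pow_dvd_pow p (by omega)))
  set N : Subgroup G := ⨅ P : Sylow p G, (P : Subgroup G) with hNdef
  set P₀ : Sylow p G := default with hP₀
  set Q₀ : Sylow q G := default with hQ₀
  have hNle : ∀ P : Sylow p G, N ≤ P := fun P => iInf_le _ P
  have hcardN : Nat.card N = p ^ (n-1) := hint
  -- Sylow p cardinality
  have hfact : (Nat.card G).factorization p = n := by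
    rw [hcard', Nat.factorization_mul (by positivity) hq.pos.ne',
      hp.factorization_pow]
    simp [Nat.factorization_eq_zero_of_not_dvd
      (fun h => hpqne ((Nat.prime_dvd_prime_iff_eq hp hq).mp h))]
  have hfactq : (Nat.card G).factorization q = 1 := by
    rw [hcard', Nat.factorization_mul (by positivity) hq.pos.ne',
      hp.factorization_pow]
    simp [hq.factorization, Finsupp.single_eq_of_ne hpqne.symm]
  have hcardP : ∀ P : Sylow p G, Nat.card P = p ^ n := by
    intro P
    rw [P.card_eq_multiplicity, hfact]
  have hcardQ : Nat.card Q₀ = q := by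
    rw [Q₀.card_eq_multiplicity, hfactq, pow_one]
  -- normality
  have hQnormal : (Q₀ : Subgroup G).Normal := by
    rw [← Subgroup.normalizer_eq_top_iff]
    rw [eq_top_iff]
    intro g _
    exact Sylow.smul_eq_iff_mem_normalizer.mp (huniq _ _)
  have hNnormal : N.Normal := by
    constructor
    intro x hx g
    rw [Subgroup.mem_iInf] at hx ⊢
    intro P
    have hmem := hx (g⁻¹ • P)
    have : (↑(g⁻¹ • P) : Subgroup G) = MulAut.conj g⁻¹ • (P : Subgroup G) :=
      Sylow.coe_subgroup_smul
    rw [this, Subgroup.mem_pointwise_smul_iff_inv_smul_mem] at hmem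
    simpa [MulAut.smul_def] using hmem
  -- N is a p-group, Q₀ q-group, disjoint
  have hNp : IsPGroup p N := P₀.isPGroup'.to_le (hNle P₀)
  have hdisj : Disjoint N (Q₀ : Subgroup G) :=
    IsPGroup.disjoint_of_ne p q hpqne _ _ hNp Q₀.isPGroup'
  -- generator a of N
  obtain ⟨a, haN⟩ : ∃ a : G, zpowers a = N :=
    exists_zpowers_eq (isCyclic_of_le (hNle P₀) (hcyc P₀))
  have ha_ord : orderOf a = p ^ (n-1) := by
    rw [← Nat.card_zpowers, haN, hcardN]
  obtain ⟨b, hb_ord⟩ : ∃ b : G, orderOf b = q :=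
    exists_prime_orderOf_dvd_card q (by rw [hcard]; exact dvd_mul_left q (p ^ n))
  have hbQmem : ∀ y : G, orderOf y = q → y ∈ (Q₀ : Subgroup G) := by
    intro y hy
    have hpg : IsPGroup q (zpowers y) :=
      IsPGroup.of_card (by rw [Nat.card_zpowers, hy, pow_one])
    obtain ⟨Q', hQ'⟩ := hpg.exists_le_sylow
    rw [huniq Q' Q₀] at hQ'
    exact hQ' (mem_zpowers y)
  have hbQ : zpowers b = (Q₀ : Subgroup G) := by
    apply Subgroup.eq_of_le_of_card_ge (zpowers_le.mpr (hbQmem b hb_ord))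
    rw [Nat.card_zpowers, hb_ord, hcardQ]
  have hab : Commute a b := by
    refine Subgroup.commute_of_normal_of_disjoint N Q₀ hNnormal hQnormal hdisj a b ?_ ?_
    · rw [← haN]; exact mem_zpowers a
    · rw [← hbQ]; exact mem_zpowers b
  have hcop : Nat.Coprime (p ^ (n-1)) q := Nat.Coprime.pow_left _ ((Nat.coprime_primes hp hq).mpr hpqne)
  set z := a * b with hz
  have hz_ord : orderOf z = p ^ (n-1) * q := by
    rw [hz, hab.orderOf_mul_eq_mul_orderOf_of_coprime (by rw [ha_ord, hb_ord]; exact hcop),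
      ha_ord, hb_ord]
  set C : Subgroup G := zpowers z with hC
  have h1C : (1:G) ∈ C := one_mem _
  -- a, b ∈ C
  have hpow_mem : ∀ (x w : G) (k : ℕ), Nat.Coprime k (orderOf w) → w ^ k ∈ zpowers x → w ∈ zpowers x := by
    intro x w k hk hmem
    rcases eq_or_ne (orderOf w) 1 with h1 | h1
    · rw [orderOf_eq_one_iff] at h1
      rw [h1]; exact one_mem _
    have hM1 : 1 < orderOf w := by
      have := orderOf_pos w
      omega
    obtain ⟨u, -, hu⟩ := Nat.exists_mul_mod_eq_one_of_coprime hk hM1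
    have hw : (w ^ k) ^ u = w := by
      rw [← pow_mul]
      conv_lhs => rw [← Nat.div_add_mod (k*u) (orderOf w)]
      rw [pow_add, pow_mul, pow_orderOf_eq_one, one_pow, one_mul, hu, pow_one]
    rw [← hw]
    exact Subgroup.pow_mem _ hmem u
  have haC : a ∈ C := by
    apply hpow_mem z a q
    · rw [ha_ord]; exact hcop.symm
    · have : a ^ q = z ^ q := by
        rw [hz, hab.mul_pow, ← hb_ord, pow_orderOf_eq_one, mul_one]
      rw [this]; exact Subgroup.pow_mem _ (mem_zpowers z) q
  have hbC : b ∈ C := by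
    apply hpow_mem z b (p ^ (n-1))
    · rw [hb_ord]; exact hcop
    · have : b ^ (p ^ (n-1)) = z ^ (p ^ (n-1)) := by
        rw [hz, hab.mul_pow, ← ha_ord, pow_orderOf_eq_one, one_mul]
      rw [this]; exact Subgroup.pow_mem _ (mem_zpowers z) _
  have hNC : N ≤ C := by rw [← haN]; exact zpowers_le.mpr haC
  have hQC : (Q₀ : Subgroup G) ≤ C := by rw [← hbQ]; exact zpowers_le.mpr hbC
  -- membership in N from small p-power order
  have hmemN : ∀ x : G, orderOf x ∣ p ^ (n-1) → x ∈ N := by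
    intro x hx
    obtain ⟨i, hi, hxi⟩ := (Nat.dvd_prime_pow hp).mp hx
    have hpg : IsPGroup p (zpowers x) := IsPGroup.of_card (by rw [Nat.card_zpowers, hxi])
    obtain ⟨P, hP⟩ := hpg.exists_le_sylow
    obtain ⟨c, hc⟩ := exists_zpowers_eq (hcyc P)
    have hxc : x ∈ zpowers c := by rw [hc]; exact hP (mem_zpowers x)
    have hac : a ∈ zpowers c := by rw [hc]; exact hNle P (by rw [← haN]; exact mem_zpowers a)
    have := mem_zpowers_of_orderOf_dvd hxc hac (by rw [ha_ord]; exact hx)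
    rwa [haN] at this
  -- order in C divides p^(n-1) * q
  have hordC : ∀ x : G, x ∈ C → orderOf x ∣ p ^ (n-1) * q := by
    intro x hx
    have : orderOf x ∣ orderOf z := by
      rw [← Nat.card_zpowers, ← Nat.card_zpowers]
      exact Subgroup.card_dvd_of_le (zpowers_le.mpr hx)
    rwa [hz_ord] at this
  -- structure of elements outside C
  have hout : ∀ x : G, x ∉ C → orderOf x = p ^ n ∧ ∃ P : Sylow p G, (P : Subgroup G) = zpowers x := by
    intro x hx
    have hdvdG : orderOf x ∣ p ^ n * q := by rw [← hcard']; exact orderOf_dvd_natCard x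
    have hsylow_of_ord : orderOf x = p ^ n → ∃ P : Sylow p G, (P : Subgroup G) = zpowers x := by
      intro hord
      have hpg : IsPGroup p (zpowers x) := IsPGroup.of_card (by rw [Nat.card_zpowers, hord])
      obtain ⟨P, hP⟩ := hpg.exists_le_sylow
      refine ⟨P, (Subgroup.eq_of_le_of_card_ge hP ?_).symm⟩
      rw [Nat.card_zpowers, hord, hcardP P]
    by_cases hqd : q ∣ orderOf x
    · obtain ⟨s, hs⟩ := hqd
      have hs0 : 0 < s := by
        have h0 := orderOf_pos x
        rw [hs] at h0
        exact Nat.pos_of_ne_zero (by rintro rfl; simp at h0)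
      have h1 : q * s ∣ q * p ^ n := by
        rw [← hs, mul_comm q (p ^ n)]
        exact hdvdG
      have hsdvd : s ∣ p ^ n := (mul_dvd_mul_iff_left (a := q) (by positivity)).mp h1
      have hys : orderOf (x ^ s) = q := by
        rw [orderOf_pow, hs, Nat.gcd_eq_right ⟨q, mul_comm q s⟩, Nat.mul_div_cancel q hs0]
      have hws : orderOf (x ^ q) = s := by
        rw [orderOf_pow, hs, Nat.gcd_eq_right ⟨s, rfl⟩, Nat.mul_div_cancel_left s hq.pos]
      have hysC : x ^ s ∈ C := hQC (hbQmem _ hys)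
      obtain ⟨i, hi, hsi⟩ := (Nat.dvd_prime_pow hp).mp hsdvd
      rcases Nat.lt_or_ge i n with hlt | hge
      · exfalso
        apply hx
        have hxqN : x ^ q ∈ N := hmemN _ (by rw [hws, hsi]; exact pow_dvd_pow p (by omega))
        have hcops : Nat.Coprime q s :=
          (Nat.Prime.coprime_iff_not_dvd hq).mpr (fun hqs => hqnp (hqs.trans hsdvd))
        have hbez : (1 : ℤ) = q * Nat.gcdA q s + s * Nat.gcdB q s := by
          have hab := Nat.gcd_eq_gcd_ab q s
          rw [Nat.Coprime.gcd_eq_one hcops] at hab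
          exact_mod_cast hab
        have hxe : x = (x ^ q) ^ (Nat.gcdA q s) * (x ^ s) ^ (Nat.gcdB q s) := by
          conv_lhs => rw [← zpow_one x]
          rw [hbez, zpow_add, zpow_mul, zpow_mul, zpow_natCast, zpow_natCast]
        rw [hxe]
        exact mul_mem (Subgroup.zpow_mem _ (hNC hxqN) _) (Subgroup.zpow_mem _ hysC _)
      · exfalso
        have hin : i = n := le_antisymm hi hge
        have hordx : orderOf x = Nat.card G := by
          rw [hs, hcard', hsi, hin, mul_comm]
        have htop : zpowers x = ⊤ := by
          apply Subgroup.eq_top_of_card_eq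
          rw [Nat.card_zpowers, hordx]
        have hwmem : x ^ q ∈ N := by
          rw [Subgroup.mem_iInf]
          intro P
          obtain ⟨c, hc⟩ := exists_zpowers_eq (hcyc P)
          have hcord : orderOf c = p ^ n := by
            rw [← Nat.card_zpowers, hc]
            exact hcardP P
          have hw : x ^ q ∈ zpowers x := Subgroup.pow_mem _ (mem_zpowers x) q
          have hcx : c ∈ zpowers x := by rw [htop]; trivial
          have hm := mem_zpowers_of_orderOf_dvd hw hcx
            (by rw [hws, hsi, hin, hcord])
          rwa [hc] at hm
        have hcard_le : Nat.card (zpowers (x ^ q)) ≤ Nat.card N :=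
          Subgroup.card_le_of_le (zpowers_le.mpr hwmem)
        rw [Nat.card_zpowers, hws, hsi, hin, hcardN] at hcard_le
        have : p ^ (n - 1) < p ^ n := Nat.pow_lt_pow_right (by omega) (by omega)
        omega
    · have hcopq : Nat.Coprime (orderOf x) q :=
        ((Nat.Prime.coprime_iff_not_dvd hq).mpr hqd).symm
      have hdvd : orderOf x ∣ p ^ n := hcopq.dvd_of_dvd_mul_right hdvdG
      obtain ⟨i, hi, hxi⟩ := (Nat.dvd_prime_pow hp).mp hdvd
      rcases Nat.lt_or_ge i n with hlt | hge
      · exact absurd (hNC (hmemN x (by rw [hxi]; exact pow_dvd_pow p (by omega)))) hx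
      · have hin : i = n := le_antisymm hi hge
        rw [hin] at hxi
        exact ⟨hxi, hsylow_of_ord hxi⟩
  have hNout : ∀ x : G, x ∉ C → N ≤ zpowers x := by
    intro x hx
    obtain ⟨-, P, hP⟩ := hout x hx
    rw [← hP]; exact hNle P
  -- the embedding
  obtain ⟨em⟩ : Nonempty (Sylow p G ↪ {y : ↥N // y ≠ 1}) := by
    haveI := Fintype.ofFinite (Sylow p G)
    haveI := Fintype.ofFinite (↥N)
    apply Function.Embedding.nonempty_of_card_le
    have hc1 : Fintype.card {y : ↥N // y ≠ 1} = Nat.card N - 1 := by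
      rw [Fintype.card_subtype_compl, Fintype.card_subtype_eq, Nat.card_eq_fintype_card]
    have hc2 : Nat.card (Sylow p G) ≤ q := by
      have hdvd := Sylow.card_dvd_index P₀
      have hidx : (P₀ : Subgroup G).index = q := by
        have hmul := Subgroup.card_mul_index (P₀ : Subgroup G)
        rw [hcardP P₀, hcard'] at hmul
        exact Nat.eq_of_mul_eq_mul_left (by positivity) hmul
      rw [hidx] at hdvd
      exact Nat.le_of_dvd hq.pos hdvd
    rw [hc1, hcardN, ← Nat.card_eq_fintype_card]
    omega
  have hsyl : ∀ x : G, ∃ P : Sylow p G, x ∉ C → (P : Subgroup G) = zpowers x := by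
    intro x
    by_cases hx : x ∈ C
    · exact ⟨P₀, fun h => absurd hx h⟩
    · obtain ⟨-, P, hP⟩ := hout x hx
      exact ⟨P, fun _ => hP⟩
  choose S hS using hsyl
  set W : G → G := fun x => ((em (S x) : ↥N) : G) with hW
  have hWmem : ∀ x, W x ∈ N := fun x => ((em (S x)) : ↥N).2
  have hWne1 : ∀ x, W x ≠ 1 := by
    intro x h
    exact (em (S x)).2 (Subtype.ext h)
  have hWinj : ∀ x y, x ∉ C → y ∉ C → W x = W y → zpowers x = zpowers y := by
    intro x y hx hy h
    have h2 : em (S x) = em (S y) := Subtype.ext (Subtype.ext h)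
    have h3 : S x = S y := em.injective h2
    rw [← hS x hx, ← hS y hy, h3]
  -- the coloring
  set D : G → G → Prop := fun x y =>
    (x = 1 ∧ q ∣ orderOf y) ∨ (y = 1 ∧ q ∣ orderOf x) ∨ (x ∉ C ∧ y = W x) ∨ (y ∉ C ∧ x = W y)
    with hD
  set col : G → G → Fin 2 := fun x y => if D x y then 0 else 1 with hcol
  have hDsymm : ∀ x y, D x y ↔ D y x := by
    intro x y
    rw [hD]
    dsimp only
    constructor <;>
    · rintro (h | h | h | h)
      exacts [Or.inr (Or.inl h), Or.inl h, Or.inr (Or.inr (Or.inr h)), Or.inr (Or.inr (Or.inl h))]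
  have hcolsymm : ∀ x y, col x y = col y x := by
    intro x y
    rw [hcol]
    exact if_congr (hDsymm x y) rfl rfl
  set ζ : Sym2 G → Fin 2 := Sym2.lift ⟨col, hcolsymm⟩ with hζ
  have hζxy : ∀ x y : G, ζ s(x, y) = col x y := fun x y => rfl
  have hCord_p : ∀ u : G, u ∈ C → ¬ q ∣ orderOf u → orderOf u ∣ p ^ (n-1) := by
    intro u hu hqu
    have h1 := hordC u hu
    have hcopq : Nat.Coprime (orderOf u) q :=
      ((Nat.Prime.coprime_iff_not_dvd hq).mpr hqu).symm
    exact hcopq.dvd_of_dvd_mul_right h1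
  have hCadj : ∀ u v : G, u ∈ C → v ∈ C → (q ∣ orderOf u ↔ q ∣ orderOf v) →
      (u ∈ zpowers v ∨ v ∈ zpowers u) := by
    intro u v hu hv hiff
    rw [hC] at hu hv
    by_cases hqu : q ∣ orderOf u
    · have hqv : q ∣ orderOf v := hiff.mp hqu
      obtain ⟨s, hs⟩ := hqu
      obtain ⟨t, ht⟩ := hqv
      have hsp : s ∣ p ^ (n-1) := by
        have h1 : q * s ∣ q * p ^ (n-1) := by
          rw [← hs, mul_comm q (p ^ (n-1))]
          exact hordC u hu
        exact (mul_dvd_mul_iff_left (a := q) (by positivity)).mp h1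
      have htp : t ∣ p ^ (n-1) := by
        have h1 : q * t ∣ q * p ^ (n-1) := by
          rw [← ht, mul_comm q (p ^ (n-1))]
          exact hordC v hv
        exact (mul_dvd_mul_iff_left (a := q) (by positivity)).mp h1
      rcases dvd_or_dvd_of_dvd_prime_pow hp hsp htp with hd | hd
      · exact Or.inl (mem_zpowers_of_orderOf_dvd hu hv (by rw [hs, ht]; exact mul_dvd_mul_left q hd))
      · exact Or.inr (mem_zpowers_of_orderOf_dvd hv hu (by rw [hs, ht]; exact mul_dvd_mul_left q hd))
    · have hqv : ¬ q ∣ orderOf v := fun h => hqu (hiff.mpr h)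
      have hup := hCord_p u hu hqu
      have hvp := hCord_p v hv hqv
      rcases dvd_or_dvd_of_dvd_prime_pow hp hup hvp with hd | hd
      · exact Or.inl (mem_zpowers_of_orderOf_dvd hu hv hd)
      · exact Or.inr (mem_zpowers_of_orderOf_dvd hv hu hd)
  -- color evaluation lemmas
  have hcol_in1 : ∀ u : G, u ≠ 1 → u ∈ C → q ∣ orderOf u → col u 1 = 0 := by
    intro u hu1 huC hqu
    rw [hcol]
    exact if_pos (Or.inr (Or.inl ⟨rfl, hqu⟩))
  have hcol_in2 : ∀ u : G, u ≠ 1 → u ∈ C → ¬ q ∣ orderOf u → col u 1 = 1 := by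
    intro u hu1 huC hqu
    rw [hcol]
    apply if_neg
    rw [hD]
    rintro (⟨h1, -⟩ | ⟨-, h2⟩ | ⟨h3, -⟩ | ⟨h4, -⟩)
    · exact hu1 h1
    · exact hqu h2
    · exact h3 huC
    · exact h4 h1C
  have hcol_1v : ∀ v : G, q ∣ orderOf v → col 1 v = 0 := by
    intro v hqv
    rw [hcol]
    exact if_pos (Or.inl ⟨rfl, hqv⟩)
  have hcol_out1 : ∀ u : G, u ∉ C → col u 1 = 1 := by
    intro u hu
    rw [hcol]
    apply if_neg
    rw [hD]
    rintro (⟨h1, -⟩ | ⟨-, h2⟩ | ⟨-, h3⟩ | ⟨h4, -⟩)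
    · exact hu (h1 ▸ h1C)
    · rw [(hout u hu).1] at h2
      exact hqnp h2
    · exact hWne1 u h3.symm
    · exact h4 h1C
  have hcol_W : ∀ u : G, u ∉ C → col u (W u) = 0 := by
    intro u hu
    rw [hcol]
    exact if_pos (Or.inr (Or.inr (Or.inl ⟨hu, rfl⟩)))
  have hcol_Wv : ∀ u v : G, u ∉ C → v ∉ C → zpowers u ≠ zpowers v → col (W u) v = 1 := by
    intro u v hu hv hzp
    rw [hcol]
    apply if_neg
    rw [hD]
    rintro (⟨h1, -⟩ | ⟨h2, -⟩ | ⟨h3, -⟩ | ⟨-, h4⟩)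
    · exact hWne1 u h1
    · exact hv (h2 ▸ h1C)
    · exact h3 (hNC (hWmem u))
    · exact hzp (hWinj u v hu hv h4)
  have h2mem : ∃ ζ' : Sym2 G → Fin 2, IsRainbowColoring (powerGraph G) ζ' := by
    refine ⟨ζ, ?_⟩
    intro u v
    by_cases huv : u = v
    · subst huv
      exact ⟨SimpleGraph.Walk.nil, SimpleGraph.Walk.IsPath.nil, by simp⟩
    by_cases hadj : (powerGraph G).Adj u v
    · refine ⟨SimpleGraph.Walk.cons hadj SimpleGraph.Walk.nil, ?_, by simp⟩
      apply SimpleGraph.Walk.IsPath.cons SimpleGraph.Walk.IsPath.nil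
      simp [huv]
    · have hne2 : u ∉ zpowers v ∧ v ∉ zpowers u := by
        have h1 : ¬ (u ∈ zpowers v ∨ v ∈ zpowers u) := fun h => hadj ⟨huv, h⟩
        push_neg at h1
        exact h1
      have hbuild : ∀ w : G, w ≠ u → w ≠ v →
          (u ∈ zpowers w ∨ w ∈ zpowers u) → (w ∈ zpowers v ∨ v ∈ zpowers w) →
          ζ s(u, w) ≠ ζ s(w, v) →
          ∃ pth : (powerGraph G).Walk u v, pth.IsPath ∧ (pth.edges.map ζ).Nodup := by
        intro w hwu hwv h1 h2 hne
        have ha1 : (powerGraph G).Adj u w := ⟨fun h => hwu h.symm, h1⟩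
        have ha2 : (powerGraph G).Adj w v := ⟨hwv, h2⟩
        refine ⟨SimpleGraph.Walk.cons ha1 (SimpleGraph.Walk.cons ha2 SimpleGraph.Walk.nil),
          ?_, ?_⟩
        · rw [SimpleGraph.Walk.isPath_def]
          simp only [SimpleGraph.Walk.support_cons, SimpleGraph.Walk.support_nil]
          refine List.nodup_cons.mpr ⟨?_, List.nodup_cons.mpr ⟨?_, List.nodup_singleton v⟩⟩
          · simp only [List.mem_cons, List.mem_singleton, List.not_mem_nil]
            rintro (h | h | h)
            exacts [hwu h.symm, huv h, h.elim]
          · simp only [List.mem_cons, List.mem_singleton, List.not_mem_nil]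
            rintro (h | h)
            exacts [hwv h, h.elim]
        · simp [hne]
      by_cases hu : u ∈ C <;> by_cases hv : v ∈ C
      · -- both in C
        have hu1 : u ≠ 1 := by
          intro h
          subst h
          exact hne2.1 (one_mem _)
        have hv1 : v ≠ 1 := by
          intro h
          subst h
          exact hne2.2 (one_mem _)
        have hxor : ¬ (q ∣ orderOf u ↔ q ∣ orderOf v) := by
          intro hiff
          rcases hCadj u v hu hv hiff with h | h
          · exact hne2.1 h
          · exact hne2.2 h
        by_cases hqu : q ∣ orderOf u
        · have hqv : ¬ q ∣ orderOf v := fun h => hxor (iff_of_true hqu h)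
          apply hbuild 1 (Ne.symm hu1) (Ne.symm hv1) (Or.inr (one_mem _)) (Or.inl (one_mem _))
          rw [hζxy, hζxy, hcol_in1 u hu1 hu hqu, hcolsymm 1 v, hcol_in2 v hv1 hv hqv]
          simp
        · have hqv : q ∣ orderOf v := by
            by_contra h
            exact hxor (iff_of_false hqu h)
          apply hbuild 1 (Ne.symm hu1) (Ne.symm hv1) (Or.inr (one_mem _)) (Or.inl (one_mem _))
          rw [hζxy, hζxy, hcol_in2 u hu1 hu hqu, hcol_1v v hqv]
          simp
      · -- u ∈ C, v ∉ C
        have hu1 : u ≠ 1 := by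
          intro h
          subst h
          exact hne2.1 (one_mem _)
        have hv1 : v ≠ 1 := fun h => hv (h ▸ h1C)
        have hqu : q ∣ orderOf u := by
          by_contra h
          exact hne2.1 (hNout v hv (hmemN u (hCord_p u hu h)))
        apply hbuild 1 (Ne.symm hu1) (Ne.symm hv1) (Or.inr (one_mem _)) (Or.inl (one_mem _))
        rw [hζxy, hζxy, hcol_in1 u hu1 hu hqu, hcolsymm 1 v, hcol_out1 v hv]
        simp
      · -- u ∉ C, v ∈ C
        have hv1 : v ≠ 1 := by
          intro h
          subst h
          exact hne2.2 (one_mem _)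
        have hu1 : u ≠ 1 := fun h => hu (h ▸ h1C)
        have hqv : q ∣ orderOf v := by
          by_contra h
          exact hne2.2 (hNout u hu (hmemN v (hCord_p v hv h)))
        apply hbuild 1 (Ne.symm hu1) (Ne.symm hv1) (Or.inr (one_mem _)) (Or.inl (one_mem _))
        rw [hζxy, hζxy, hcol_out1 u hu, hcol_1v v hqv]
        simp
      · -- both outside C
        have hzp : zpowers u ≠ zpowers v := by
          intro h
          apply hne2.2
          rw [h]
          exact mem_zpowers v
        have hwu : W u ≠ u := by
          intro h
          apply hu
          rw [← h]
          exact hNC (hWmem u)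
        have hwv : W u ≠ v := by
          intro h
          apply hv
          rw [← h]
          exact hNC (hWmem u)
        apply hbuild (W u) hwu hwv (Or.inr (hNout u hu (hWmem u))) (Or.inl (hNout v hv (hWmem u)))
        rw [hζxy, hζxy, hcol_W u hu, hcol_Wv u v hu hv hzp]
        simp
  show sInf {k : ℕ | ∃ ζ : Sym2 G → Fin k, IsRainbowColoring (powerGraph G) ζ} = 2
  have h2mem' : 2 ∈ {k : ℕ | ∃ ζ : Sym2 G → Fin k, IsRainbowColoring (powerGraph G) ζ} := h2mem
  apply le_antisymm
  · exact Nat.sInf_le h2mem'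
  · apply le_csInf ⟨2, h2mem'⟩
    rintro k ⟨ζk, hζk⟩
    by_contra hlt
    push_neg at hlt
    interval_cases k
    · exact (ζk s(1, 1)).elim0
    · obtain ⟨x, hx⟩ := exists_prime_orderOf_dvd_card p
        (by rw [hcard]; exact dvd_mul_of_dvd_left (dvd_pow_self p hn.ne') q)
      obtain ⟨y, hy⟩ := exists_prime_orderOf_dvd_card q (by rw [hcard]; exact dvd_mul_left q _)
      have hxy : x ≠ y := by
        intro h
        rw [h, hy] at hx
        omega
      have hcon : ¬ (powerGraph G).Adj x y := by
        rintro ⟨-, hmem | hmem⟩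
        · have hd : orderOf x ∣ orderOf y := orderOf_dvd_of_mem_zpowers hmem
          rw [hx, hy] at hd
          exact hpqne ((Nat.prime_dvd_prime_iff_eq hp hq).mp hd)
        · have hd : orderOf y ∣ orderOf x := orderOf_dvd_of_mem_zpowers hmem
          rw [hx, hy] at hd
          exact hpqne (((Nat.prime_dvd_prime_iff_eq hq hp).mp hd).symm)
      obtain ⟨w, hwp, hwn⟩ := hζk x y
      have hlen : w.edges.length ≤ 1 := by
        have h1 := hwn.length_le_card
        simpa using h1
      cases w with
      | nil => exact hxy rfl
      | @cons _ m _ h w' =>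
        have hml : w'.length = 0 := by
          rw [SimpleGraph.Walk.length_edges, SimpleGraph.Walk.length_cons] at hlen
          omega
        have hm := SimpleGraph.Walk.eq_of_length_eq_zero hml
        subst hm
        exact hcon h
end

section
/- Let G be the semidirect product ℤ_27 ⋉ ℤ_7 given by the presentation ⟨a, b : a^27 = b^7 = e, a^{-1} b a = b^2⟩ (i.e., ℤ_27 acts on ℤ_7 with a generator of ℤ_27 acting as the squaring automorphism of ℤ_7). Then the rainbow connection number of the power graph Γ_G equals 2. -/
set_option linter.unusedSectionVars false
set_option maxHeartbeats 800000


section RCAux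
open Subgroup

lemma cyc_mem {G : Type*} [Group G] [Finite G] {c u v : G}
    (hu : u ∈ zpowers c) (hv : v ∈ zpowers c) (hdvd : orderOf u ∣ orderOf v) :
    u ∈ zpowers v := by
  obtain ⟨i, rfl⟩ := (Submonoid.mem_powers_iff _ _).1 ((mem_powers_iff_mem_zpowers).2 hu)
  obtain ⟨j, rfl⟩ := (Submonoid.mem_powers_iff _ _).1 ((mem_powers_iff_mem_zpowers).2 hv)
  have hn : 0 < orderOf c := orderOf_pos c
  set n := orderOf c with hndef
  have hgi : orderOf (c ^ i) = n / Nat.gcd n i := orderOf_pow c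
  have hgj : orderOf (c ^ j) = n / Nat.gcd n j := orderOf_pow c
  -- g_j ∣ g_i
  have hgin : Nat.gcd n i ∣ n := Nat.gcd_dvd_left n i
  have hgjn : Nat.gcd n j ∣ n := Nat.gcd_dvd_left n j
  have hA : n = orderOf (c ^ i) * Nat.gcd n i := by
    rw [hgi]; exact (Nat.div_mul_cancel hgin).symm
  have hB : n = orderOf (c ^ j) * Nat.gcd n j := by
    rw [hgj]; exact (Nat.div_mul_cancel hgjn).symm
  obtain ⟨k, hk⟩ := hdvd
  have hcancel : Nat.gcd n i = k * Nat.gcd n j := by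
    have h0 : 0 < orderOf (c ^ i) := orderOf_pos _
    have h2 : orderOf (c ^ i) * Nat.gcd n i = orderOf (c ^ i) * (k * Nat.gcd n j) := by
      rw [← hA, ← mul_assoc, ← hk, ← hB]
    exact Nat.eq_of_mul_eq_mul_left h0 h2
  have hbez : c ^ Nat.gcd n j ∈ zpowers (c ^ j) := by
    have h2 : c ^ (Nat.gcd n j : ℤ) ∈ zpowers (c ^ j) := by
      rw [Nat.gcd_eq_gcd_ab n j, zpow_add, zpow_mul, zpow_mul]
      have h1 : (c : G) ^ (n : ℤ) = 1 := by
        rw [zpow_natCast, hndef, pow_orderOf_eq_one]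
      rw [h1, one_zpow, one_mul, zpow_natCast]
      exact zpow_mem (mem_zpowers _) _
    rwa [zpow_natCast] at h2
  have hii : Nat.gcd n i ∣ i := Nat.gcd_dvd_right n i
  have heq : c ^ i = (c ^ Nat.gcd n j) ^ (k * (i / Nat.gcd n i)) := by
    rw [← pow_mul]
    have h3 : Nat.gcd n j * (k * (i / Nat.gcd n i)) = i := by
      calc Nat.gcd n j * (k * (i / Nat.gcd n i))
          = (k * Nat.gcd n j) * (i / Nat.gcd n i) := by ring
        _ = Nat.gcd n i * (i / Nat.gcd n i) := by rw [← hcancel]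
        _ = i := Nat.mul_div_cancel' hii
    rw [h3]
  rw [heq]
  exact pow_mem hbez _

section Cyc
variable {G : Type*} [Group G]

variable [Fintype G] (a b : G)

lemma conj_b (hb : orderOf b = 7) (hrel : a⁻¹ * b * a = b ^ 2) :
    a * b * a⁻¹ = b ^ 4 := by
  have hb7 : b ^ 7 = 1 := by rw [← hb]; exact pow_orderOf_eq_one b
  have hu2 : (a * b * a⁻¹) ^ 2 = b := by
    rw [conj_pow, ← hrel]; simp [mul_assoc]
  have hu7 : (a * b * a⁻¹) ^ 7 = 1 := by rw [conj_pow, hb7]; simp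
  calc a * b * a⁻¹ = ((a * b * a⁻¹) ^ 7) * (a * b * a⁻¹) := by rw [hu7, one_mul]
    _ = ((a * b * a⁻¹) ^ 2) ^ 4 := by rw [← pow_succ, ← pow_mul]
    _ = b ^ 4 := by rw [hu2]

lemma comm3 (hb : orderOf b = 7) (hrel : a⁻¹ * b * a = b ^ 2) :
    Commute (a ^ 3) b := by
  have hb7 : b ^ 7 = 1 := by rw [← hb]; exact pow_orderOf_eq_one b
  have hba : b * a = a * b ^ 2 := by rw [← hrel]; simp [mul_assoc]
  have hb2a : b ^ 2 * a = a * b ^ 4 := by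
    calc b ^ 2 * a = b * (b * a) := by simp [pow_succ, mul_assoc]
      _ = b * (a * b ^ 2) := by rw [hba]
      _ = (b * a) * b ^ 2 := by simp [mul_assoc]
      _ = (a * b ^ 2) * b ^ 2 := by rw [hba]
      _ = a * b ^ 4 := by simp [pow_succ, mul_assoc]
  have hb4a : b ^ 4 * a = a * b ^ 8 := by
    calc b ^ 4 * a = b ^ 2 * (b ^ 2 * a) := by simp [pow_succ, mul_assoc]
      _ = b ^ 2 * (a * b ^ 4) := by rw [hb2a]
      _ = (b ^ 2 * a) * b ^ 4 := by simp [mul_assoc]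
      _ = (a * b ^ 4) * b ^ 4 := by rw [hb2a]
      _ = a * b ^ 8 := by simp [pow_succ, mul_assoc]
  have hb8 : b ^ 8 = b := by
    calc b ^ 8 = b ^ 7 * b := by rw [← pow_succ]
      _ = b := by rw [hb7, one_mul]
  show a ^ 3 * b = b * a ^ 3
  calc a ^ 3 * b = a * (a * (a * b)) := by simp [pow_succ, mul_assoc]
    _ = b * a ^ 3 := by
        rw [show b * a ^ 3 = b * a * a * a by simp [pow_succ, mul_assoc], hba,
          show a * b ^ 2 * a * a = a * (b ^ 2 * a) * a by simp [mul_assoc], hb2a,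
          show a * (a * b ^ 4) * a = a * a * (b ^ 4 * a) by simp [mul_assoc], hb4a, hb8]
        simp [mul_assoc]

lemma ord_c (ha : orderOf a = 27) (hb : orderOf b = 7) (hrel : a⁻¹ * b * a = b ^ 2) :
    orderOf (a ^ 3 * b) = 63 := by
  have h3 : orderOf (a ^ 3) = 9 := by rw [orderOf_pow, ha]; norm_num
  rw [(comm3 a b hb hrel).orderOf_mul_eq_mul_orderOf_of_coprime (by rw [h3, hb]; decide), h3, hb]

lemma b_mem_c (ha : orderOf a = 27) (hb : orderOf b = 7) (hrel : a⁻¹ * b * a = b ^ 2) :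
    b ∈ zpowers (a ^ 3 * b) := by
  have ha27 : a ^ 27 = 1 := by rw [← ha]; exact pow_orderOf_eq_one a
  have hb7 : b ^ 7 = 1 := by rw [← hb]; exact pow_orderOf_eq_one b
  have e1 : (a ^ 3 : G) ^ 36 = 1 := by
    rw [← pow_mul, show 3 * 36 = 27 * 4 from rfl, pow_mul, ha27, one_pow]
  have e2 : (b : G) ^ 36 = b := by
    rw [show (36 : ℕ) = 7 * 5 + 1 from rfl, pow_add, pow_mul, hb7, one_pow, one_mul, pow_one]
  have : (a ^ 3 * b) ^ 36 = b := by
    rw [(comm3 a b hb hrel).mul_pow, e1, e2, one_mul]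
  exact mem_zpowers_iff.2 ⟨((36 : ℕ) : ℤ), by rw [zpow_natCast]; exact this⟩

lemma a3_mem_c (ha : orderOf a = 27) (hb : orderOf b = 7) (hrel : a⁻¹ * b * a = b ^ 2) :
    a ^ 3 ∈ zpowers (a ^ 3 * b) := by
  have ha27 : a ^ 27 = 1 := by rw [← ha]; exact pow_orderOf_eq_one a
  have hb7 : b ^ 7 = 1 := by rw [← hb]; exact pow_orderOf_eq_one b
  have e1 : (a ^ 3 : G) ^ 28 = a ^ 3 := by
    rw [← pow_mul, show 3 * 28 = 27 * 3 + 3 from rfl, pow_add, pow_mul, ha27, one_pow, one_mul]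
  have e2 : (b : G) ^ 28 = 1 := by
    rw [show (28 : ℕ) = 7 * 4 from rfl, pow_mul, hb7, one_pow]
  have : (a ^ 3 * b) ^ 28 = a ^ 3 := by
    rw [(comm3 a b hb hrel).mul_pow, e1, e2, mul_one]
  exact mem_zpowers_iff.2 ⟨((28 : ℕ) : ℤ), by rw [zpow_natCast]; exact this⟩

lemma normalN (hb : orderOf b = 7) (hrel : a⁻¹ * b * a = b ^ 2)
    (hgen : Subgroup.closure {a, b} = ⊤) : (zpowers b).Normal := by
  rw [← Subgroup.normalizer_eq_top_iff]
  rw [eq_top_iff, ← hgen, Subgroup.closure_le]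
  rintro x hx
  rcases hx with rfl | hx
  · rw [SetLike.mem_coe, Subgroup.mem_normalizer_iff]
    intro h
    constructor
    · rintro ⟨k, rfl⟩
      have h1 : x * b ^ k * x⁻¹ = (b ^ 4) ^ k := by
        rw [← conj_zpow, conj_b x b hb hrel]
      rw [h1]
      exact zpow_mem (pow_mem (mem_zpowers b) 4) k
    · rintro ⟨k, hk⟩
      have hk' : b ^ k = x * h * x⁻¹ := hk
      have h1 : h = x⁻¹ * b ^ k * x := by rw [hk']; simp [mul_assoc]
      have h2 : x⁻¹ * b ^ k * x = (b ^ 2) ^ k := by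
        rw [show x⁻¹ * b ^ k * x = x⁻¹ * b ^ k * x⁻¹⁻¹ by rw [inv_inv], ← conj_zpow, inv_inv,
          hrel]
      rw [h1, h2]
      exact zpow_mem (pow_mem (mem_zpowers b) 2) k
  · rcases hx with rfl
    exact Subgroup.le_normalizer (mem_zpowers x)

end Cyc


section S2
variable {G : Type*} [Group G] [Fintype G] (a b : G)

lemma mem_c_of_dvd63 (ha : orderOf a = 27) (hb : orderOf b = 7)
    (hrel : a⁻¹ * b * a = b ^ 2) (hgen : Subgroup.closure {a, b} = ⊤)
    (hcard : Fintype.card G = 189) :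
    ∀ g : G, orderOf g ∣ 63 → g ∈ zpowers (a ^ 3 * b) := by
  haveI hN : (zpowers b).Normal := normalN a b hb hrel hgen
  set N := zpowers b
  let π := QuotientGroup.mk' N
  have hsurj : Function.Surjective π := QuotientGroup.mk'_surjective N
  have hcardN : Nat.card N = 7 := by rw [Nat.card_zpowers, hb]
  have hcardQ : Nat.card (G ⧸ N) = 27 := by
    have h1 : Nat.card G = Nat.card (G ⧸ N) * Nat.card N :=
      Subgroup.card_eq_card_quotient_mul_card_subgroup N
    rw [Nat.card_eq_fintype_card, hcard, hcardN] at h1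
    omega
  have hπb : π b = 1 := by
    rw [QuotientGroup.mk'_apply, QuotientGroup.eq_one_iff]
    exact mem_zpowers b
  have htop : zpowers (π a) = ⊤ := by
    have h1 : Subgroup.map π ⊤ = ⊤ := Subgroup.map_top_of_surjective π hsurj
    rw [← hgen, MonoidHom.map_closure] at h1
    rw [eq_top_iff, ← h1, Subgroup.closure_le]
    rintro x ⟨y, hy, rfl⟩
    rcases hy with rfl | hy
    · exact mem_zpowers _
    · rcases hy with rfl
      rw [SetLike.mem_coe, hπb]
      exact one_mem _
  have horda : orderOf (π a) = 27 := by
    rw [← Nat.card_zpowers, htop, Subgroup.card_top, hcardQ]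
  intro g hg
  have h9 : (π g) ^ 9 = 1 := by
    have h1 : orderOf (π g) ∣ orderOf g := orderOf_map_dvd π g
    have h2 : orderOf (π g) ∣ 63 := h1.trans hg
    have h3 : orderOf (π g) ∣ 27 := by
      rw [← hcardQ]; exact orderOf_dvd_natCard _
    have : orderOf (π g) ∣ 9 := Nat.dvd_gcd h2 h3 |>.trans (by norm_num)
    exact orderOf_dvd_iff_pow_eq_one.1 this
  obtain ⟨k, hk⟩ : π g ∈ zpowers (π a) := htop ▸ Subgroup.mem_top _
  have hk' : (π a) ^ k = π g := hk
  have h27 : ((27 : ℕ) : ℤ) ∣ k * 9 := by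
    rw [← horda]
    rw [orderOf_dvd_iff_zpow_eq_one]
    rw [zpow_mul, hk', show (9:ℤ) = ((9:ℕ):ℤ) by norm_num, zpow_natCast]
    exact h9
  have h3k : (3 : ℤ) ∣ k := by omega
  obtain ⟨m, rfl⟩ := h3k
  have hπ3m : π (a ^ (3 * m)) = π g := by
    rw [map_zpow]; exact hk'
  have hmem : (a ^ (3 * m))⁻¹ * g ∈ N := by
    have h1 : π ((a ^ (3 * m))⁻¹ * g) = 1 := by
      rw [map_mul, map_inv, hπ3m]
      simp
    exact (QuotientGroup.eq_one_iff _).1 h1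
  have hc : a ^ (3 * m) ∈ zpowers (a ^ 3 * b) := by
    rw [show (3 * m : ℤ) = (3 : ℕ) * m by norm_num, zpow_mul, zpow_natCast]
    exact zpow_mem (a3_mem_c a b ha hb hrel) m
  have hNc : N ≤ zpowers (a ^ 3 * b) := by
    rw [zpowers_le]
    exact b_mem_c a b ha hb hrel
  have : g = a ^ (3 * m) * ((a ^ (3 * m))⁻¹ * g) := by simp [mul_assoc]
  rw [this]
  exact mul_mem hc (hNc hmem)

lemma dichotomy (ha : orderOf a = 27) (hb : orderOf b = 7)
    (hrel : a⁻¹ * b * a = b ^ 2) (hcard : Fintype.card G = 189) :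
    ∀ g : G, orderOf g ∣ 63 ∨ orderOf g = 27 := by
  intro g
  have hdvd : orderOf g ∣ 189 := by rw [← hcard]; exact orderOf_dvd_card
  by_cases h189 : orderOf g = 189
  · exfalso
    have htop : zpowers g = ⊤ := by
      apply Subgroup.eq_top_of_card_eq
      rw [Nat.card_zpowers, h189, Nat.card_eq_fintype_card, hcard]
    obtain ⟨i, hi⟩ : a ∈ zpowers g := htop ▸ Subgroup.mem_top _
    obtain ⟨j, hj⟩ : b ∈ zpowers g := htop ▸ Subgroup.mem_top _
    have hab : a * b = b * a := by
      rw [← hi, ← hj, ← zpow_add, ← zpow_add, add_comm]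
    have hbb : b = b ^ 2 := by
      rw [← hrel, mul_assoc, ← hab, ← mul_assoc, inv_mul_cancel, one_mul]
    have : b = 1 := by
      have h2 : b * b = b * 1 := by rw [mul_one, ← pow_two, ← hbb]
      exact (mul_left_cancel h2)
    rw [this, orderOf_one] at hb
    norm_num at hb
  · have hfact : ∀ d ∈ Nat.divisors 189, d ∣ 63 ∨ d = 27 ∨ d = 189 := by decide
    have hmem : orderOf g ∈ Nat.divisors 189 := Nat.mem_divisors.2 ⟨hdvd, by norm_num⟩
    rcases hfact _ hmem with h | h | h
    · exact Or.inl h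
    · exact Or.inr h
    · exact absurd h h189

end S2

section S3
variable {G : Type*} [Group G] [Fintype G] (a b : G)

lemma zp3_eq (ha : orderOf a = 27) (hb : orderOf b = 7)
    (hrel : a⁻¹ * b * a = b ^ 2) (hgen : Subgroup.closure {a, b} = ⊤)
    (hcard : Fintype.card G = 189) :
    ∀ x : G, orderOf x = 27 → zpowers (x ^ 3) = zpowers (a ^ 3) := by
  intro x hx
  have hox3 : orderOf (x ^ 3) = 9 := by rw [orderOf_pow, hx]; norm_num
  have hoa3 : orderOf (a ^ 3) = 9 := by rw [orderOf_pow, ha]; norm_num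
  have hx3c : x ^ 3 ∈ zpowers (a ^ 3 * b) :=
    mem_c_of_dvd63 a b ha hb hrel hgen hcard _ (by rw [hox3]; norm_num)
  have ha3c : a ^ 3 ∈ zpowers (a ^ 3 * b) := a3_mem_c a b ha hb hrel
  have h1 : x ^ 3 ∈ zpowers (a ^ 3) := cyc_mem hx3c ha3c (by rw [hox3, hoa3])
  have h2 : a ^ 3 ∈ zpowers (x ^ 3) := cyc_mem ha3c hx3c (by rw [hox3, hoa3])
  exact le_antisymm (zpowers_le.2 h1) (zpowers_le.2 h2)

lemma ord9_mem (ha : orderOf a = 27) (hb : orderOf b = 7)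
    (hrel : a⁻¹ * b * a = b ^ 2) (hgen : Subgroup.closure {a, b} = ⊤)
    (hcard : Fintype.card G = 189) :
    ∀ x z : G, orderOf x = 27 → orderOf z ∣ 9 → z ∈ zpowers x := by
  intro x z hx hz
  have hoa3 : orderOf (a ^ 3) = 9 := by rw [orderOf_pow, ha]; norm_num
  have hzc : z ∈ zpowers (a ^ 3 * b) :=
    mem_c_of_dvd63 a b ha hb hrel hgen hcard _ (hz.trans (by norm_num))
  have h1 : z ∈ zpowers (a ^ 3) :=
    cyc_mem hzc (a3_mem_c a b ha hb hrel) (by rw [hoa3]; exact hz)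
  have h2 : zpowers (a ^ 3) = zpowers (x ^ 3) := (zp3_eq a b ha hb hrel hgen hcard x hx).symm
  rw [h2] at h1
  exact (zpowers_le.2 (pow_mem (mem_zpowers x) 3)) h1

end S3

section S4
variable {G : Type*} [Group G] [Fintype G]

instance fact3 : Fact (Nat.Prime 3) := ⟨by norm_num⟩

lemma fact189 (hcard : Fintype.card G = 189) : (Nat.card G).factorization 3 = 3 := by
  have hc : Nat.card G = 189 := by rw [Nat.card_eq_fintype_card, hcard]
  rw [hc]
  have h1 : 3 ≤ (189 : ℕ).factorization 3 :=
    (Nat.Prime.pow_dvd_iff_le_factorization (by norm_num) (by norm_num)).1 (by norm_num)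
  have h2 : ¬ 4 ≤ (189 : ℕ).factorization 3 := by
    intro h
    have := (Nat.Prime.pow_dvd_iff_le_factorization (p := 3) (k := 4) (n := 189)
      (by norm_num) (by norm_num)).2 h
    norm_num at this
  omega

noncomputable def sylowOf (hcard : Fintype.card G = 189) (x : G) (hx : orderOf x = 27) :
    Sylow 3 G :=
  Sylow.ofCard (zpowers x) (by rw [Nat.card_zpowers, hx, fact189 hcard]; norm_num)

lemma coe_sylowOf (hcard : Fintype.card G = 189) (x : G) (hx : orderOf x = 27) :
    (sylowOf hcard x hx : Subgroup G) = zpowers x := rfl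

lemma card_sylow_le (hcard : Fintype.card G = 189) (a : G) (ha : orderOf a = 27) :
    Nat.card (Sylow 3 G) ≤ 7 := by
  haveI : Finite (Sylow 3 G) := by
    apply Finite.of_injective (fun P : Sylow 3 G => (P : Subgroup G))
    intro P Q h
    exact Sylow.ext h
  have hdvd : Nat.card (Sylow 3 G) ∣ (sylowOf hcard a ha : Subgroup G).index :=
    Sylow.card_dvd_index _
  have hind : (sylowOf hcard a ha : Subgroup G).index = 7 := by
    have h1 := Subgroup.card_mul_index (sylowOf hcard a ha : Subgroup G)
    have hc27 : Nat.card (sylowOf hcard a ha : Subgroup G) = 27 := by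
      rw [coe_sylowOf, Nat.card_zpowers, ha]
    rw [hc27, Nat.card_eq_fintype_card, hcard] at h1
    omega
  rw [hind] at hdvd
  exact Nat.le_of_dvd (by norm_num) hdvd

lemma exists_iota (hcard : Fintype.card G = 189) (a : G) (ha : orderOf a = 27) :
    ∃ ι : Sylow 3 G → ({z : G // orderOf z = 9} → Fin 2), Function.Injective ι := by
  classical
  haveI : Fintype (Sylow 3 G) := by
    haveI : Finite (Sylow 3 G) := by
      apply Finite.of_injective (fun P : Sylow 3 G => (P : Subgroup G))
      intro P Q h
      exact Sylow.ext h
    exact Fintype.ofFinite _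
  have h3 : 3 ≤ Fintype.card {z : G // orderOf z = 9} := by
    have hinj : Function.Injective (fun i : Fin 3 =>
        (⟨a ^ (![3, 6, 12] i : ℕ), by
          rw [orderOf_pow, ha]
          fin_cases i <;> norm_num⟩ : {z : G // orderOf z = 9})) := by
      intro i j hij
      have h1 : a ^ (![3, 6, 12] i : ℕ) = a ^ (![3, 6, 12] j : ℕ) := congrArg Subtype.val hij
      rw [pow_eq_pow_iff_modEq, ha] at h1
      fin_cases i <;> fin_cases j <;> simp_all [Nat.ModEq]
    calc 3 = Fintype.card (Fin 3) := by simp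
      _ ≤ _ := Fintype.card_le_of_embedding ⟨_, hinj⟩
  have hcards : Fintype.card (Sylow 3 G) ≤
      Fintype.card ({z : G // orderOf z = 9} → Fin 2) := by
    rw [Fintype.card_fun, Fintype.card_fin]
    calc Fintype.card (Sylow 3 G) ≤ 7 := by
          rw [← Nat.card_eq_fintype_card]; exact card_sylow_le hcard a ha
      _ ≤ 2 ^ 3 := by norm_num
      _ ≤ 2 ^ Fintype.card {z : G // orderOf z = 9} := Nat.pow_le_pow_right (by norm_num) h3
  obtain ⟨e⟩ := Function.Embedding.nonempty_of_card_le hcards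
  exact ⟨e, e.injective⟩

end S4

section S5
variable {G : Type*} [Group G] [Fintype G]

lemma adj_iff {x y : G} :
    (powerGraph G).Adj x y ↔ x ≠ y ∧ (x ∈ zpowers y ∨ y ∈ zpowers x) := Iff.rfl

noncomputable def myColor (hcard : Fintype.card G = 189)
    (ι : Sylow 3 G → ({z : G // orderOf z = 9} → Fin 2)) (u v : G) : Fin 2 :=
  if hu : orderOf u = 27 then
    (if hv : orderOf v = 27 then 0
     else if hz : orderOf v = 9 then ι (sylowOf hcard u hu) ⟨v, hz⟩ else 0)
  else if hv : orderOf v = 27 then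
    (if hz : orderOf u = 9 then ι (sylowOf hcard v hv) ⟨u, hz⟩ else 0)
  else (if 7 ∣ orderOf u then 1 else 0) + (if 7 ∣ orderOf v then 1 else 0)

variable (hcard : Fintype.card G = 189)
  (ι : Sylow 3 G → ({z : G // orderOf z = 9} → Fin 2))

lemma myColor_symm (u v : G) : myColor hcard ι u v = myColor hcard ι v u := by
  unfold myColor
  by_cases hu : orderOf u = 27 <;> by_cases hv : orderOf v = 27 <;>
    simp [hu, hv, add_comm]

lemma myColor_CC {u v : G} (hu : orderOf u ≠ 27) (hv : orderOf v ≠ 27) :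
    myColor hcard ι u v =
      (if 7 ∣ orderOf u then 1 else 0) + (if 7 ∣ orderOf v then 1 else 0) := by
  unfold myColor
  rw [dif_neg hu, dif_neg hv]

lemma myColor_T9 {u v : G} (hu : orderOf u = 27) (hv : orderOf v = 9) :
    myColor hcard ι u v = ι (sylowOf hcard u hu) ⟨v, hv⟩ := by
  unfold myColor
  rw [dif_pos hu, dif_neg (by rw [hv]; norm_num), dif_pos hv]

lemma myColor_T0 {u v : G} (hu : orderOf u = 27) (hv27 : orderOf v ≠ 27)
    (hv9 : orderOf v ≠ 9) : myColor hcard ι u v = 0 := by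
  unfold myColor
  rw [dif_pos hu, dif_neg hv27, dif_neg hv9]

end S5

section S6
variable {G : Type*} [Group G] [Fintype G] (a b : G)

lemma key_mixed (ha : orderOf a = 27) (hb : orderOf b = 7)
    (hrel : a⁻¹ * b * a = b ^ 2) (hgen : Subgroup.closure {a, b} = ⊤)
    (hcard : Fintype.card G = 189)
    (ι : Sylow 3 G → ({z : G // orderOf z = 9} → Fin 2))
    (u v : G) (hu : orderOf u ∣ 63) (hv : orderOf v = 27)
    (hn1 : u ∉ zpowers v) :
    ∃ z : G, (powerGraph G).Adj u z ∧ (powerGraph G).Adj z v ∧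
      myColor hcard ι u z ≠ myColor hcard ι z v := by
  have hu27 : orderOf u ≠ 27 := by
    intro h; rw [h] at hu; norm_num at hu
  have ha9 : orderOf (a ^ 9) = 3 := by rw [orderOf_pow, ha]; norm_num
  by_cases h7 : 7 ∣ orderOf u
  · by_cases h3 : 3 ∣ orderOf u
    · -- z = a ^ 9
      refine ⟨a ^ 9, ?_, ?_, ?_⟩
      · refine adj_iff.2 ⟨?_, Or.inr ?_⟩
        · intro h; rw [h, ha9] at h7; norm_num at h7
        · exact cyc_mem (mem_c_of_dvd63 a b ha hb hrel hgen hcard _ (by rw [ha9]; norm_num))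
            (mem_c_of_dvd63 a b ha hb hrel hgen hcard _ hu) (by rw [ha9]; exact h3)
      · refine adj_iff.2 ⟨?_, Or.inl ?_⟩
        · intro h; rw [← h, ha9] at hv; norm_num at hv
        · exact ord9_mem a b ha hb hrel hgen hcard v _ hv (by rw [ha9]; norm_num)
      · rw [myColor_CC hcard ι hu27 (by rw [ha9]; norm_num),
          myColor_symm hcard ι _ v,
          myColor_T0 hcard ι hv (by rw [ha9]; norm_num) (by rw [ha9]; norm_num)]
        simp only [h7, if_true, if_pos, ha9]
        decide
    · -- orderOf u = 7 ; z = 1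
      have hu1 : u ≠ 1 := by
        intro h; rw [h, orderOf_one] at h7; norm_num at h7
      refine ⟨1, ?_, ?_, ?_⟩
      · exact adj_iff.2 ⟨hu1, Or.inr (one_mem _)⟩
      · refine adj_iff.2 ⟨?_, Or.inl (one_mem _)⟩
        intro h; rw [← h, orderOf_one] at hv; norm_num at hv
      · rw [myColor_CC hcard ι hu27 (by rw [orderOf_one]; norm_num),
          myColor_symm hcard ι _ v,
          myColor_T0 hcard ι hv (by rw [orderOf_one]; norm_num)
            (by rw [orderOf_one]; norm_num)]
        simp only [h7, if_true, if_pos, orderOf_one]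
        decide
  · -- orderOf u ∣ 9 : contradiction with hn1
    exfalso
    have hdd : ∀ d ∈ Nat.divisors 63, ¬ 7 ∣ d → d ∣ 9 := by decide
    have hu9 : orderOf u ∣ 9 :=
      hdd _ (Nat.mem_divisors.2 ⟨hu, by norm_num⟩) h7
    exact hn1 (ord9_mem a b ha hb hrel hgen hcard v u hv hu9)

end S6

section S7
variable {G : Type*} [Group G] [Fintype G] (a b : G)

lemma key (ha : orderOf a = 27) (hb : orderOf b = 7)
    (hrel : a⁻¹ * b * a = b ^ 2) (hgen : Subgroup.closure {a, b} = ⊤)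
    (hcard : Fintype.card G = 189)
    (ι : Sylow 3 G → ({z : G // orderOf z = 9} → Fin 2)) (hι : Function.Injective ι)
    (u v : G) (huv : u ≠ v) (hnadj : ¬ (powerGraph G).Adj u v) :
    ∃ z : G, (powerGraph G).Adj u z ∧ (powerGraph G).Adj z v ∧
      myColor hcard ι u z ≠ myColor hcard ι z v := by
  have hnm : u ∉ zpowers v ∧ v ∉ zpowers u := by
    rw [adj_iff] at hnadj
    push_neg at hnadj
    exact hnadj huv
  have hordc : orderOf (a ^ 3 * b) = 63 := ord_c a b ha hb hrel
  rcases dichotomy a b ha hb hrel hcard u with hu | hu <;>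
    rcases dichotomy a b ha hb hrel hcard v with hv | hv
  · -- both orders divide 63
    have hu27 : orderOf u ≠ 27 := by intro h; rw [h] at hu; norm_num at hu
    have hv27 : orderOf v ≠ 27 := by intro h; rw [h] at hv; norm_num at hv
    have huc : u ∈ zpowers (a ^ 3 * b) := mem_c_of_dvd63 a b ha hb hrel hgen hcard _ hu
    have hvc : v ∈ zpowers (a ^ 3 * b) := mem_c_of_dvd63 a b ha hb hrel hgen hcard _ hv
    by_cases h77 : (7 ∣ orderOf u ↔ 7 ∣ orderOf v)
    · exfalso
      have hdd : ∀ d1 ∈ Nat.divisors 63, ∀ d2 ∈ Nat.divisors 63,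
          ((7 ∣ d1) ↔ (7 ∣ d2)) → (d1 ∣ d2 ∨ d2 ∣ d1) := by decide
      rcases hdd _ (Nat.mem_divisors.2 ⟨hu, by norm_num⟩)
          _ (Nat.mem_divisors.2 ⟨hv, by norm_num⟩) h77 with h | h
      · exact hnm.1 (cyc_mem huc hvc h)
      · exact hnm.2 (cyc_mem hvc huc h)
    · -- mixed: z = a^3*b
      have hc27 : orderOf (a ^ 3 * b) ≠ 27 := by rw [hordc]; norm_num
      have h7c : 7 ∣ orderOf (a ^ 3 * b) := by rw [hordc]; norm_num
      have hdd9 : ∀ d ∈ Nat.divisors 63, ¬ 7 ∣ d → d ∣ 9 := by decide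
      have hune : u ≠ a ^ 3 * b := by
        intro hEq
        have h7u : 7 ∣ orderOf u := by rw [hEq]; exact h7c
        have h7v : ¬ 7 ∣ orderOf v := by tauto
        have hdv : orderOf v ∣ orderOf u := by
          rw [hEq, hordc]
          exact (hdd9 _ (Nat.mem_divisors.2 ⟨hv, by norm_num⟩) h7v).trans (by norm_num)
        exact hnm.2 (cyc_mem hvc huc hdv)
      have hvne : v ≠ a ^ 3 * b := by
        intro hEq
        have h7v : 7 ∣ orderOf v := by rw [hEq]; exact h7c
        have h7u : ¬ 7 ∣ orderOf u := by tauto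
        have hdu : orderOf u ∣ orderOf v := by
          rw [hEq, hordc]
          exact (hdd9 _ (Nat.mem_divisors.2 ⟨hu, by norm_num⟩) h7u).trans (by norm_num)
        exact hnm.1 (cyc_mem huc hvc hdu)
      refine ⟨a ^ 3 * b, adj_iff.2 ⟨hune, Or.inl huc⟩,
        adj_iff.2 ⟨Ne.symm hvne, Or.inr hvc⟩, ?_⟩
      rw [myColor_CC hcard ι hu27 hc27, myColor_CC hcard ι hc27 hv27]
      by_cases h7u : 7 ∣ orderOf u <;> by_cases h7v : 7 ∣ orderOf v <;>
        simp [h7u, h7v, h7c] <;> tauto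
  · -- u ∣ 63, v = 27
    exact key_mixed a b ha hb hrel hgen hcard ι u v hu hv hnm.1
  · -- u = 27, v ∣ 63
    obtain ⟨z, h1, h2, h3⟩ :=
      key_mixed a b ha hb hrel hgen hcard ι v u hv hu hnm.2
    exact ⟨z, h2.symm, h1.symm, by
      rw [myColor_symm hcard ι u z, myColor_symm hcard ι z v]
      exact fun h => h3 h.symm⟩
  · -- both order 27
    have hzne : zpowers u ≠ zpowers v := by
      intro h
      exact hnm.2 (h ▸ mem_zpowers v)
    have hSne : sylowOf hcard u hu ≠ sylowOf hcard v hv := by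
      intro h
      apply hzne
      have := congrArg (fun P : Sylow 3 G => (P : Subgroup G)) h
      simpa [coe_sylowOf] using this
    have hfne : ι (sylowOf hcard u hu) ≠ ι (sylowOf hcard v hv) :=
      fun h => hSne (hι h)
    obtain ⟨⟨z, hz9⟩, hzz⟩ := Function.ne_iff.1 hfne
    have hz27 : orderOf z ≠ 27 := by rw [hz9]; norm_num
    refine ⟨z, adj_iff.2 ⟨?_, Or.inr (ord9_mem a b ha hb hrel hgen hcard u z hu
        (by rw [hz9]))⟩,
      adj_iff.2 ⟨?_, Or.inl (ord9_mem a b ha hb hrel hgen hcard v z hv (by rw [hz9]))⟩, ?_⟩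
    · intro h; rw [h] at hu; exact hz27 hu
    · intro h; rw [← h] at hv; exact hz27 hv
    · rw [myColor_T9 hcard ι hu hz9, myColor_symm hcard ι z v, myColor_T9 hcard ι hv hz9]
      exact hzz

lemma exists_rainbow (ha : orderOf a = 27) (hb : orderOf b = 7)
    (hrel : a⁻¹ * b * a = b ^ 2) (hgen : Subgroup.closure {a, b} = ⊤)
    (hcard : Fintype.card G = 189) :
    ∃ ζ : Sym2 G → Fin 2, IsRainbowColoring (powerGraph G) ζ := by
  obtain ⟨ι, hι⟩ := exists_iota hcard a ha
  refine ⟨Sym2.lift ⟨myColor hcard ι, fun x y => myColor_symm hcard ι x y⟩, ?_⟩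
  intro u v
  by_cases huv : u = v
  · subst huv
    exact ⟨SimpleGraph.Walk.nil, by simp, by simp⟩
  by_cases hadj : (powerGraph G).Adj u v
  · refine ⟨SimpleGraph.Walk.cons hadj SimpleGraph.Walk.nil, ?_, by simp⟩
    simp [SimpleGraph.Walk.isPath_def, huv]
  · obtain ⟨z, h1, h2, h3⟩ := key a b ha hb hrel hgen hcard ι hι u v huv hadj
    refine ⟨SimpleGraph.Walk.cons h1 (SimpleGraph.Walk.cons h2 SimpleGraph.Walk.nil), ?_, ?_⟩
    · simp [SimpleGraph.Walk.isPath_def, huv, h1.ne, h2.ne]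
    · simpa using h3

end S7


end RCAux

open Subgroup in
theorem rc_powerGraph_Z27_semidirect_Z7
    (G : Type*) [Group G] [Fintype G] (a b : G)
    (ha : orderOf a = 27) (hb : orderOf b = 7)
    (hrel : a⁻¹ * b * a = b ^ 2)
    (hgen : Subgroup.closure {a, b} = ⊤)
    (hcard : Fintype.card G = 189) :
    rainbowConnection (powerGraph G) = 2 := by
  have hab : a ≠ b := by
    intro h
    rw [h, hb] at ha
    norm_num at ha
  have hanb : a ∉ zpowers b := by
    intro h
    have hd := orderOf_dvd_of_mem_zpowers h
    rw [ha, hb] at hd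
    norm_num at hd
  have hbna : b ∉ zpowers a := by
    intro h
    have htop : zpowers a = ⊤ := by
      rw [eq_top_iff, ← hgen, Subgroup.closure_le]
      rintro x hx
      rcases hx with rfl | hx
      · exact mem_zpowers x
      · rcases hx with rfl
        exact h
    have hcc : Nat.card (zpowers a) = Nat.card G := by rw [htop, Subgroup.card_top]
    rw [Nat.card_zpowers, ha, Nat.card_eq_fintype_card, hcard] at hcc
    norm_num at hcc
  have hnadj : ¬ (powerGraph G).Adj a b := by
    rw [adj_iff]
    push_neg
    intro _
    exact ⟨hanb, hbna⟩
  have h2S : ∃ ζ : Sym2 G → Fin 2, IsRainbowColoring (powerGraph G) ζ :=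
    exists_rainbow a b ha hb hrel hgen hcard
  have hlow : ∀ k ∈ {k : ℕ | ∃ ζ : Sym2 G → Fin k, IsRainbowColoring (powerGraph G) ζ},
      2 ≤ k := by
    rintro k ⟨ζ, hζ⟩
    by_contra hlt
    push_neg at hlt
    interval_cases k
    · exact (ζ s((1 : G), 1)).elim0
    · obtain ⟨p, hp, hnd⟩ := hζ a b
      have hle : ∀ (l : List (Fin 1)), l.Nodup → l.length ≤ 1 := by
        intro l hl
        match l with
        | [] => simp
        | [x] => simp
        | x :: y :: t =>
          exfalso
          rw [List.nodup_cons] at hl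
          exact hl.1 (by rw [Subsingleton.elim x y]; exact List.mem_cons_self)
      have hlen : p.length ≤ 1 := by
        have h1 := hle _ hnd
        rwa [List.length_map, SimpleGraph.Walk.length_edges] at h1
      rcases Nat.le_one_iff_eq_zero_or_eq_one.1 hlen with h | h
      · exact hab (SimpleGraph.Walk.eq_of_length_eq_zero h)
      · exact hnadj (SimpleGraph.Walk.adj_of_length_eq_one h)
  have hne : {k : ℕ | ∃ ζ : Sym2 G → Fin k, IsRainbowColoring (powerGraph G) ζ}.Nonempty :=
    ⟨2, h2S⟩
  exact le_antisymm (Nat.sInf_le h2S) (hlow _ (Nat.sInf_mem hne))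
end

section
/- Let G be a finite noncyclic group with no maximal involutions. If there exists a prime p dividing |G| such that G has more than one subgroup of order p, then the rainbow connection number of the power graph Γ_G equals 3. -/
open Finset


open Finset


open Finset

section GroupAux

variable {G : Type*} [Group G]

lemma orderOf_dvd_card_of_mem' {J : Subgroup G} {x : G} (hx : x ∈ J) :
    orderOf x ∣ Nat.card J := by
  have h := orderOf_dvd_natCard (⟨x, hx⟩ : J)
  simpa [Subgroup.orderOf_coe] using h

lemma zpowers_eq_of_mem' [Fintype G] {p : ℕ} (hp : p.Prime) {J : Subgroup G}
    (hJ : Nat.card J = p) {x : G} (hx : x ∈ J) (hx1 : x ≠ 1) :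
    Subgroup.zpowers x = J ∧ orderOf x = p := by
  have hdvd : orderOf x ∣ p := hJ ▸ orderOf_dvd_card_of_mem' hx
  have hord : orderOf x = p :=
    (hp.eq_one_or_self_of_dvd _ hdvd).resolve_left fun h => hx1 (orderOf_eq_one_iff.mp h)
  refine ⟨Subgroup.eq_of_le_of_card_ge (Subgroup.zpowers_le.mpr hx) ?_, hord⟩
  rw [hJ, Nat.card_zpowers, hord]

lemma mem_inter_zpowers_eq_one [Fintype G] {p : ℕ} (hp : p.Prime) {x y : G}
    (hx : orderOf x = p) (hy : orderOf y = p)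
    (hxy : Subgroup.zpowers x ≠ Subgroup.zpowers y) {u : G}
    (hux : u ∈ Subgroup.zpowers x) (huy : u ∈ Subgroup.zpowers y) : u = 1 := by
  by_contra h1
  have hcx : Nat.card (Subgroup.zpowers x) = p := by rw [Nat.card_zpowers, hx]
  have hcy : Nat.card (Subgroup.zpowers y) = p := by rw [Nat.card_zpowers, hy]
  obtain ⟨ex, -⟩ := zpowers_eq_of_mem' hp hcx hux h1
  obtain ⟨ey, -⟩ := zpowers_eq_of_mem' hp hcy huy h1
  exact hxy (ex ▸ ey ▸ rfl)

lemma isCyclic_zpowers (w : G) : IsCyclic (Subgroup.zpowers w) := by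
  refine ⟨⟨⟨w, Subgroup.mem_zpowers w⟩, fun x => ?_⟩⟩
  obtain ⟨k, hk⟩ := x.2
  exact ⟨k, Subtype.ext (by simpa using hk)⟩

lemma zpowers_eq_zpowers_of_mem_zpowers [Fintype G] {p : ℕ} (hp : p.Prime) {w x y : G}
    (hx : orderOf x = p) (hy : orderOf y = p)
    (hxw : x ∈ Subgroup.zpowers w) (hyw : y ∈ Subgroup.zpowers w) :
    Subgroup.zpowers x = Subgroup.zpowers y := by
  classical
  haveI := isCyclic_zpowers w
  set C := Subgroup.zpowers w with hC
  set x' : C := ⟨x, hxw⟩ with hx'def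
  set y' : C := ⟨y, hyw⟩ with hy'def
  have hx' : orderOf x' = p := by rw [← Subgroup.orderOf_coe x']; exact hx
  have hy' : orderOf y' = p := by rw [← Subgroup.orderOf_coe y']; exact hy
  have hT := IsCyclic.card_pow_eq_one_le (α := C) (n := p) hp.pos
  have key : ∀ z' : C, orderOf z' = p →
      (univ.filter (fun a : C => a ∈ Subgroup.zpowers z')) =
        (univ.filter (fun a : C => a ^ p = 1)) := by
    intro z' hz'
    apply Finset.eq_of_subset_of_card_le
    · intro a ha
      simp only [mem_filter, mem_univ, true_and] at ha ⊢
      have hda : orderOf a ∣ p := by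
        have := orderOf_dvd_card_of_mem' ha
        rwa [Nat.card_zpowers, hz'] at this
      exact orderOf_dvd_iff_pow_eq_one.mp hda
    · have hcard : (univ.filter (fun a : C => a ∈ Subgroup.zpowers z')).card = p := by
        rw [← Fintype.card_subtype]
        exact (Nat.card_eq_fintype_card (α := {a : C // a ∈ Subgroup.zpowers z'})).symm.trans
          ((Nat.card_zpowers z').trans hz')
      rw [hcard]; exact hT
  have heq := (key x' hx').trans (key y' hy').symm
  have hmem : ∀ a : C, a ∈ Subgroup.zpowers x' ↔ a ∈ Subgroup.zpowers y' := by
    intro a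
    have := Finset.ext_iff.mp heq a
    simpa using this
  apply le_antisymm
  · rw [Subgroup.zpowers_le]
    obtain ⟨k, hk⟩ := (hmem x').mp (Subgroup.mem_zpowers x')
    exact ⟨k, by simpa using congrArg Subtype.val hk⟩
  · rw [Subgroup.zpowers_le]
    obtain ⟨k, hk⟩ := (hmem y').mpr (Subgroup.mem_zpowers y')
    exact ⟨k, by simpa using congrArg Subtype.val hk⟩

lemma exists_generator_of_card_prime [Fintype G] {p : ℕ} (hp : p.Prime) {J : Subgroup G}
    (hJ : Nat.card J = p) : ∃ x : G, x ≠ 1 ∧ Subgroup.zpowers x = J ∧ orderOf x = p := by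
  have : Nontrivial J := Finite.one_lt_card_iff_nontrivial.mp (by rw [hJ]; exact hp.one_lt)
  obtain ⟨y, hy⟩ := exists_ne (1 : J)
  have hy1 : (y : G) ≠ 1 := fun h => hy (Subtype.ext h)
  obtain ⟨hz, hord⟩ := zpowers_eq_of_mem' hp hJ y.2 hy1
  exact ⟨y, hy1, hz, hord⟩

end GroupAux

open Finset Equiv.Perm

section Frobenius

variable {G : Type*} [Group G] [Fintype G]

theorem frobenius_dvd {p : ℕ} (hp : p.Prime) (hdvd : p ∣ Fintype.card G) :
    p ∣ Nat.card {x : G // x ^ p = 1} := by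
  haveI : Fact p.Prime := ⟨hp⟩
  haveI : NeZero p := ⟨hp.ne_zero⟩
  haveI : Fact (1 < p) := ⟨hp.one_lt⟩
  have rot_p_mul : ∀ (v : vectorsProdEqOne G p) (q : ℕ),
      VectorsProdEqOne.rotate v (p * q) = v := by
    intro v q
    induction q with
    | zero => simpa using VectorsProdEqOne.rotate_zero v
    | succ q ih =>
      have h1 : p * (q + 1) = p * q + p := by ring
      rw [h1, ← VectorsProdEqOne.rotate_rotate v (p * q) p, ih,
        VectorsProdEqOne.rotate_length]
  have rot_mod : ∀ (v : vectorsProdEqOne G p) (k : ℕ),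
      VectorsProdEqOne.rotate v (k % p) = VectorsProdEqOne.rotate v k := by
    intro v k
    conv_rhs => rw [← Nat.div_add_mod k p]
    rw [← VectorsProdEqOne.rotate_rotate v (p * (k / p)) (k % p), rot_p_mul]
  letI : SMul (Multiplicative (ZMod p)) (vectorsProdEqOne G p) :=
    ⟨fun g v => VectorsProdEqOne.rotate v (Multiplicative.toAdd g).val⟩
  letI : MulAction (Multiplicative (ZMod p)) (vectorsProdEqOne G p) :=
    { one_smul := fun v => by
        show VectorsProdEqOne.rotate v (Multiplicative.toAdd (1 : Multiplicative (ZMod p))).val = v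
        have : (Multiplicative.toAdd (1 : Multiplicative (ZMod p))).val = 0 := by
          simp [ZMod.val_zero]
        rw [this]
        exact VectorsProdEqOne.rotate_zero v
      mul_smul := fun a b v => by
        show VectorsProdEqOne.rotate v (Multiplicative.toAdd (a * b)).val =
          VectorsProdEqOne.rotate (VectorsProdEqOne.rotate v (Multiplicative.toAdd b).val)
            (Multiplicative.toAdd a).val
        rw [VectorsProdEqOne.rotate_rotate]
        have h1 : (Multiplicative.toAdd (a * b)).val =
            ((Multiplicative.toAdd b).val + (Multiplicative.toAdd a).val) % p := by
          rw [show Multiplicative.toAdd (a * b) =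
              Multiplicative.toAdd a + Multiplicative.toAdd b from rfl, ZMod.val_add,
            Nat.add_comm]
        rw [h1, rot_mod] }
  have hPG : IsPGroup p (Multiplicative (ZMod p)) := IsPGroup.of_card (n := 1) (by
    rw [Nat.card_eq_fintype_card, pow_one]
    simp [ZMod.card p])
  have hmod := hPG.card_modEq_card_fixedPoints (vectorsProdEqOne G p)
  have hdvdV : p ∣ Nat.card (vectorsProdEqOne G p) := by
    rw [Nat.card_eq_fintype_card, VectorsProdEqOne.card]
    exact hdvd.trans (dvd_pow_self _ (by have := hp.two_le; omega))
  have hdvdF : p ∣ Nat.card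
      (MulAction.fixedPoints (Multiplicative (ZMod p)) (vectorsProdEqOne G p)) :=
    Nat.modEq_zero_iff_dvd.mp (hmod.symm.trans (Nat.modEq_zero_iff_dvd.mpr hdvdV))
  have e : {x : G // x ^ p = 1} ≃
      MulAction.fixedPoints (Multiplicative (ZMod p)) (vectorsProdEqOne G p) := by
    refine Equiv.ofBijective (fun x => ⟨⟨⟨List.replicate p x.1, by simp⟩, by
        show (List.replicate p x.1).prod = 1
        rw [List.prod_replicate, x.2]⟩, fun g => ?_⟩) ⟨?_, ?_⟩
    · exact Subtype.ext (Subtype.ext (List.rotate_replicate x.1 p _))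
    · intro x y hxy
      have hl : List.replicate p x.1 = List.replicate p y.1 := by
        have h2 := congrArg
          (fun z : ↥(MulAction.fixedPoints (Multiplicative (ZMod p)) (vectorsProdEqOne G p)) =>
            ((z : vectorsProdEqOne G p) : List.Vector G p).1) hxy
        simpa using h2
      have : x.1 ∈ List.replicate p y.1 := by
        rw [← hl]
        exact List.mem_replicate.mpr ⟨hp.ne_zero, rfl⟩
      exact Subtype.ext (List.eq_of_mem_replicate this)
    · rintro ⟨⟨⟨l, hl⟩, hprod⟩, hfix⟩
      have h1 : l.rotate 1 = l := by
        have h := hfix (Multiplicative.ofAdd (1 : ZMod p))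
        have h2 := congrArg (fun z => ((z : vectorsProdEqOne G p) : List.Vector G p).1) h
        simp only at h2
        have hv1 : (Multiplicative.toAdd (Multiplicative.ofAdd (1 : ZMod p))).val = 1 :=
          ZMod.val_one p
        have h3 : (((Multiplicative.ofAdd (1 : ZMod p) •
            (⟨⟨l, hl⟩, hprod⟩ : vectorsProdEqOne G p)) : vectorsProdEqOne G p) :
              List.Vector G p).1 =
            l.rotate ((Multiplicative.toAdd (Multiplicative.ofAdd (1 : ZMod p))).val) := rfl
        rw [h3, hv1] at h2
        exact h2
      obtain ⟨a, ha⟩ := List.rotate_one_eq_self_iff_eq_replicate.mp h1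
      refine ⟨⟨a, ?_⟩, ?_⟩
      · have hpr : l.prod = 1 := hprod
        rw [ha, hl, List.prod_replicate] at hpr
        exact hpr
      · apply Subtype.ext
        apply Subtype.ext
        apply Subtype.ext
        show List.replicate p a = l
        rw [ha, hl]
  rw [Nat.card_congr e]
  exact hdvdF

end Frobenius
section Counting

variable {G : Type*} [Group G] [Fintype G]

theorem exists_third_subgroup {p : ℕ} (hp : p.Prime) (hdvd : p ∣ Fintype.card G)
    {H K : Subgroup G} (hne : H ≠ K) (hH : Nat.card H = p) (hK : Nat.card K = p) :
    ∃ L : Subgroup G, Nat.card L = p ∧ L ≠ H ∧ L ≠ K := by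
  classical
  haveI : Finite (Subgroup G) :=
    Finite.of_injective (fun J : Subgroup G => (J : Set G)) SetLike.coe_injective
  haveI := Fintype.ofFinite (Subgroup G)
  set S : Finset (Subgroup G) := univ.filter (fun J : Subgroup G => Nat.card J = p) with hS
  have hmemS : ∀ J : Subgroup G, J ∈ S ↔ Nat.card J = p := by
    intro J; simp [hS]
  have hcount : (univ.filter (fun x : G => orderOf x = p)).card = S.card * (p - 1) := by
    rw [Finset.card_eq_sum_card_fiberwise (f := fun x : G => Subgroup.zpowers x) (t := S)
      (fun x hx => by
        simp only [coe_filter, mem_filter, mem_univ, true_and, Set.mem_setOf_eq] at hx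
        exact (hmemS _).mpr (by rw [Nat.card_zpowers, hx]))]
    rw [Finset.sum_congr rfl (fun J hJ => ?_), Finset.sum_const, smul_eq_mul]
    have hJp : Nat.card J = p := (hmemS J).mp hJ
    have hfib : ((univ.filter (fun x : G => orderOf x = p)).filter
        (fun x => Subgroup.zpowers x = J)) = (univ.filter (fun x : G => x ∈ J)).erase 1 := by
      ext x
      simp only [mem_filter, mem_univ, true_and, mem_erase]
      constructor
      · rintro ⟨hord, hz⟩
        refine ⟨fun h => ?_, hz ▸ Subgroup.mem_zpowers x⟩
        rw [h, orderOf_one] at hord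
        exact hp.ne_one hord.symm
      · rintro ⟨h1, hxJ⟩
        obtain ⟨hz, hord⟩ := zpowers_eq_of_mem' hp hJp hxJ h1
        exact ⟨hord, hz⟩
    have hcardJ : (univ.filter (fun x : G => x ∈ J)).card = p := by
      rw [← Fintype.card_subtype]
      exact (Nat.card_eq_fintype_card (α := {x : G // x ∈ J})).symm.trans hJp
    rw [hfib, Finset.card_erase_of_mem (by simp [J.one_mem]), hcardJ]
  have hF : (univ.filter (fun x : G => x ^ p = 1)) =
      insert 1 (univ.filter (fun x : G => orderOf x = p)) := by
    ext x
    simp only [mem_filter, mem_univ, true_and, mem_insert]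
    constructor
    · intro hx
      rcases hp.eq_one_or_self_of_dvd _ (orderOf_dvd_of_pow_eq_one hx) with h | h
      · exact Or.inl (orderOf_eq_one_iff.mp h)
      · exact Or.inr h
    · rintro (rfl | h)
      · exact one_pow p
      · exact h ▸ pow_orderOf_eq_one x
  have hd : p ∣ (univ.filter (fun x : G => x ^ p = 1)).card := by
    have h := frobenius_dvd hp hdvd
    rwa [Nat.card_eq_fintype_card, Fintype.card_subtype] at h
  have hone : (1 : G) ∉ (univ.filter (fun x : G => orderOf x = p)) := by
    simp only [mem_filter, mem_univ, true_and, orderOf_one]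
    exact fun h => hp.ne_one h.symm
  rw [hF, Finset.card_insert_of_notMem hone, hcount] at hd
  have hS2 : 2 ≤ S.card :=
    Finset.one_lt_card.mpr ⟨H, (hmemS H).mpr hH, K, (hmemS K).mpr hK, hne⟩
  have hS3 : 3 ≤ S.card := by
    by_contra hlt
    have hSeq : S.card = 2 := by omega
    rw [hSeq] at hd
    obtain ⟨m, hm⟩ := hd
    have hp2 := hp.two_le
    rcases Nat.lt_or_ge m 2 with hm2 | hm2
    · interval_cases m <;> omega
    · have : 2 * p ≤ p * m := by
        calc 2 * p = p * 2 := by ring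
        _ ≤ p * m := Nat.mul_le_mul_left p hm2
      omega
  have hK' : K ∈ (S.erase H) := Finset.mem_erase.mpr ⟨hne.symm, (hmemS K).mpr hK⟩
  have hH' : H ∈ S := (hmemS H).mpr hH
  have hcard2 : 0 < ((S.erase H).erase K).card := by
    rw [Finset.card_erase_of_mem hK', Finset.card_erase_of_mem hH']
    omega
  obtain ⟨L, hL⟩ := Finset.card_pos.mp hcard2
  obtain ⟨hLK, hL2⟩ := Finset.mem_erase.mp hL
  obtain ⟨hLH, hL3⟩ := Finset.mem_erase.mp hL2
  exact ⟨L, (hmemS L).mp hL3, hLH, hLK⟩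

end Counting
section Graph

open SimpleGraph

variable {G : Type*} [Group G] [Fintype G]

lemma powerGraph_adj_one {x : G} (hx : x ≠ 1) : (powerGraph G).Adj 1 x :=
  ⟨fun h => hx h.symm, Or.inl (Subgroup.one_mem _)⟩

lemma not_adj_of_gen {p : ℕ} (hp : p.Prime) {x y : G} (hx : orderOf x = p) (hy : orderOf y = p)
    (hxy : Subgroup.zpowers x ≠ Subgroup.zpowers y) : ¬ (powerGraph G).Adj x y := by
  have hx1 : x ≠ 1 := fun h => hp.ne_one (by rw [← hx, h, orderOf_one])
  have hy1 : y ≠ 1 := fun h => hp.ne_one (by rw [← hy, h, orderOf_one])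
  rintro ⟨-, hor | hor⟩
  · exact hx1 (mem_inter_zpowers_eq_one hp hx hy hxy (Subgroup.mem_zpowers x) hor)
  · exact hy1 (mem_inter_zpowers_eq_one hp hx hy hxy hor (Subgroup.mem_zpowers y))

lemma common_neighbor_eq_one {p : ℕ} (hp : p.Prime) {x y : G} (hx : orderOf x = p)
    (hy : orderOf y = p) (hxy : Subgroup.zpowers x ≠ Subgroup.zpowers y) {w : G}
    (h1 : (powerGraph G).Adj x w) (h2 : (powerGraph G).Adj w y) : w = 1 := by
  have hx1 : x ≠ 1 := fun h => hp.ne_one (by rw [← hx, h, orderOf_one])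
  have hy1 : y ≠ 1 := fun h => hp.ne_one (by rw [← hy, h, orderOf_one])
  rcases h1.2 with hxw | hwx
  · rcases h2.2 with hwy | hyw
    · exact absurd (mem_inter_zpowers_eq_one hp hx hy hxy (Subgroup.mem_zpowers x)
        (Subgroup.zpowers_le.mpr hwy hxw)) hx1
    · exact absurd (zpowers_eq_zpowers_of_mem_zpowers hp hx hy hxw hyw) hxy
  · rcases h2.2 with hwy | hyw
    · exact mem_inter_zpowers_eq_one hp hx hy hxy hwx hwy
    · exact absurd (mem_inter_zpowers_eq_one hp hx hy hxy (Subgroup.zpowers_le.mpr hwx hyw)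
        (Subgroup.mem_zpowers y)) hy1

lemma rc_lower_bound {p : ℕ} (hp : p.Prime) {x y z : G}
    (hx : orderOf x = p) (hy : orderOf y = p) (hz : orderOf z = p)
    (hxy : Subgroup.zpowers x ≠ Subgroup.zpowers y)
    (hyz : Subgroup.zpowers y ≠ Subgroup.zpowers z)
    (hxz : Subgroup.zpowers x ≠ Subgroup.zpowers z)
    {k : ℕ} (ζ : Sym2 G → Fin k) (hζ : IsRainbowColoring (powerGraph G) ζ) : 3 ≤ k := by
  by_contra hk
  push_neg at hk
  have key : ∀ a b : G, orderOf a = p → orderOf b = p →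
      Subgroup.zpowers a ≠ Subgroup.zpowers b → ζ s(1, a) ≠ ζ s(1, b) := by
    intro a b ha hb hab
    obtain ⟨q, hq, hnd⟩ := hζ a b
    have hlen : q.edges.length ≤ k := by
      have h1 : (q.edges.map ζ).length ≤ Fintype.card (Fin k) := hnd.length_le_card
      simpa using h1
    have hne_ab : a ≠ b := fun h => hab (h ▸ rfl)
    have hnadj := not_adj_of_gen hp ha hb hab
    cases q with
    | nil => exact absurd rfl hne_ab
    | cons h1 q' =>
      cases q' with
      | nil => exact absurd h1 hnadj
      | cons h2 q'' =>
        cases q'' with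
        | nil =>
          have hw := common_neighbor_eq_one hp ha hb hab h1 h2
          subst hw
          simp only [SimpleGraph.Walk.edges_cons, SimpleGraph.Walk.edges_nil,
            List.map_cons, List.map_nil, List.nodup_cons, List.mem_cons, List.not_mem_nil,
            or_false, List.nodup_nil, and_true, List.mem_singleton] at hnd
          have hne := hnd.1
          rw [show s(a, (1 : G)) = s((1 : G), a) from Sym2.eq_swap] at hne
          exact hne
        | cons h3 q''' =>
          simp only [SimpleGraph.Walk.edges_cons, List.length_cons] at hlen
          omega
  have h1 := key x y hx hy hxy
  have h2 := key y z hy hz hyz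
  have h3 := key x z hx hz hxz
  have hnd : ([ζ s(1,x), ζ s(1,y), ζ s(1,z)] : List (Fin k)).Nodup := by
    simp [List.nodup_cons, h1, h2, h3]
  have hle := hnd.length_le_card
  simp at hle
  omega

def auxG (G : Type*) [Group G] : SimpleGraph G where
  Adj a b := (powerGraph G).Adj a b ∧ a ≠ 1 ∧ b ≠ 1
  symm := ⟨fun a b h => ⟨h.1.symm, h.2.2, h.2.1⟩⟩
  loopless := ⟨fun a h => h.1.1 rfl⟩

lemma auxG_exists_neighbor (hno : ∀ x : G, ¬ IsMaximalInvolution x) {u : G} (hu : u ≠ 1) :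
    ∃ w, (auxG G).Adj u w := by
  rcases eq_or_ne (orderOf u) 2 with h2 | h2
  · have hm := hno u
    rw [IsMaximalInvolution, not_and] at hm
    have hm2 := hm h2
    push_neg at hm2
    obtain ⟨g, hg, hgne⟩ := hm2
    refine ⟨g, ⟨⟨?_, Or.inl hg⟩, hu, fun hg1 => ?_⟩⟩
    · rintro rfl
      exact hgne rfl
    · rw [hg1, Subgroup.zpowers_one_eq_bot] at hg
      exact hu (Subgroup.mem_bot.mp hg)
  · have h1 : orderOf u ≠ 1 := fun h => hu (orderOf_eq_one_iff.mp h)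
    have hpos : 0 < orderOf u := orderOf_pos u
    have h3 : 3 ≤ orderOf u := by omega
    refine ⟨u ^ 2, ⟨⟨fun hequ => ?_, Or.inr (Subgroup.npow_mem_zpowers u 2)⟩, hu,
      fun hsq => ?_⟩⟩
    · apply hu
      have h4 : u * 1 = u * u := by
        calc u * 1 = u := mul_one u
        _ = u ^ 2 := hequ
        _ = u * u := pow_two u
      exact (mul_left_cancel h4).symm
    · have hdvd := orderOf_dvd_of_pow_eq_one hsq
      have := Nat.le_of_dvd (by norm_num) hdvd
      omega

noncomputable def ccol (G : Type*) [Group G] : G → Fin 3 := fun u =>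
  if ((auxG G).dist u ((auxG G).connectedComponentMk u).out) % 2 = 0 then 0 else 1

lemma ccol_ne_two (u : G) : ccol G u ≠ 2 := by
  unfold ccol
  split <;> decide

lemma dist_pred {V : Type*} {Γ : SimpleGraph V} {u r : V} (h : Γ.Reachable u r)
    (hd : 0 < Γ.dist u r) : ∃ w, Γ.Adj u w ∧ Γ.dist w r = Γ.dist u r - 1 := by
  obtain ⟨q, hq⟩ := h.exists_walk_length_eq_dist
  cases q with
  | nil =>
    rw [← hq] at hd
    simp at hd
  | @cons _ w _ hadj q' =>
    refine ⟨w, hadj, ?_⟩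
    have hle : Γ.dist w r ≤ q'.length := SimpleGraph.dist_le q'
    have hlen : q'.length + 1 = Γ.dist u r := by simpa using hq
    have hge : Γ.dist u r ≤ Γ.dist w r + 1 := by
      obtain ⟨q2, hq2⟩ := q'.reachable.exists_walk_length_eq_dist
      have hh := SimpleGraph.dist_le (SimpleGraph.Walk.cons hadj q2)
      simp only [SimpleGraph.Walk.length_cons] at hh
      omega
    omega

lemma exists_opposite_neighbor (hno : ∀ x : G, ¬ IsMaximalInvolution x) {u : G} (hu : u ≠ 1) :
    ∃ w, (auxG G).Adj u w ∧ ccol G w ≠ ccol G u := by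
  obtain ⟨w0, hw0⟩ := auxG_exists_neighbor hno hu
  have hreach : (auxG G).Reachable u ((auxG G).connectedComponentMk u).out :=
    SimpleGraph.ConnectedComponent.eq.mp (((auxG G).connectedComponentMk u).out_eq).symm
  rcases Nat.eq_zero_or_pos ((auxG G).dist u ((auxG G).connectedComponentMk u).out) with
    hd0 | hdpos
  · have hur : u = ((auxG G).connectedComponentMk u).out := (hreach.dist_eq_zero_iff).mp hd0
    refine ⟨w0, hw0, ?_⟩
    have hcc : (auxG G).connectedComponentMk w0 = (auxG G).connectedComponentMk u :=
      SimpleGraph.ConnectedComponent.eq.mpr hw0.symm.reachable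
    have hdw : (auxG G).dist w0 ((auxG G).connectedComponentMk w0).out = 1 := by
      rw [hcc, ← hur]
      exact SimpleGraph.dist_eq_one_iff_adj.mpr hw0.symm
    unfold ccol
    rw [hdw, hd0]
    decide
  · obtain ⟨w, hadj, hdw⟩ := dist_pred hreach hdpos
    refine ⟨w, hadj, ?_⟩
    have hcc : (auxG G).connectedComponentMk w = (auxG G).connectedComponentMk u :=
      SimpleGraph.ConnectedComponent.eq.mpr hadj.symm.reachable
    unfold ccol
    rw [hcc, hdw]
    split_ifs with ha hb hb
    · exfalso; omega
    · decide
    · decide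
    · exfalso; omega

open scoped Classical in
noncomputable def zeta (G : Type*) [Group G] : Sym2 G → Fin 3 :=
  Sym2.lift ⟨fun a b => if a = 1 then ccol G b else if b = 1 then ccol G a else 2, by
    intro a b
    by_cases ha : a = 1 <;> by_cases hb : b = 1 <;> simp [ha, hb]⟩

open scoped Classical in
lemma zeta_mk (a b : G) :
    zeta G s(a, b) = if a = 1 then ccol G b else if b = 1 then ccol G a else 2 := by
  simp [zeta]

lemma rc_upper (hno : ∀ x : G, ¬ IsMaximalInvolution x) :
    IsRainbowColoring (powerGraph G) (zeta G) := by
  intro u v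
  rcases eq_or_ne u v with rfl | huv
  · exact ⟨SimpleGraph.Walk.nil, by simp, by simp⟩
  by_cases hadj : (powerGraph G).Adj u v
  · refine ⟨SimpleGraph.Walk.cons hadj SimpleGraph.Walk.nil, ?_, by simp⟩
    rw [SimpleGraph.Walk.isPath_def]
    simp [huv]
  · have hu : u ≠ 1 := by
      rintro rfl
      exact hadj (powerGraph_adj_one huv.symm)
    have hv : v ≠ 1 := by
      rintro rfl
      exact hadj (powerGraph_adj_one huv).symm
    by_cases hcc : ccol G u = ccol G v
    · obtain ⟨w, hw, hwc⟩ := exists_opposite_neighbor hno hu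
      have hw1 : w ≠ 1 := hw.2.2
      have huw : u ≠ w := hw.1.1
      have hwv : w ≠ v := fun h => hadj (h ▸ hw.1)
      refine ⟨SimpleGraph.Walk.cons hw.1 (SimpleGraph.Walk.cons (powerGraph_adj_one hw1).symm
        (SimpleGraph.Walk.cons (powerGraph_adj_one hv) SimpleGraph.Walk.nil)), ?_, ?_⟩
      · rw [SimpleGraph.Walk.isPath_def]
        have h1v : (1 : G) ≠ v := fun hh => hv hh.symm
        simp [List.nodup_cons, huw, hu, huv, hw1, hwv, h1v]
      · have e1 : zeta G s(u, w) = 2 := by rw [zeta_mk, if_neg hu, if_neg hw1]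
        have e2 : zeta G s(w, 1) = ccol G w := by rw [zeta_mk, if_neg hw1, if_pos rfl]
        have e3 : zeta G s((1 : G), v) = ccol G v := by rw [zeta_mk, if_pos rfl]
        simp only [SimpleGraph.Walk.edges_cons, SimpleGraph.Walk.edges_nil, List.map_cons,
          List.map_nil, e1, e2, e3]
        have n1 : (2 : Fin 3) ≠ ccol G w := fun hh => ccol_ne_two w hh.symm
        have n2 : (2 : Fin 3) ≠ ccol G v := fun hh => ccol_ne_two v hh.symm
        have n3 : ccol G w ≠ ccol G v := fun hh => hwc (hh.trans hcc.symm)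
        simp [List.nodup_cons, n1, n2, n3]
    · refine ⟨SimpleGraph.Walk.cons (powerGraph_adj_one hu).symm
        (SimpleGraph.Walk.cons (powerGraph_adj_one hv) SimpleGraph.Walk.nil), ?_, ?_⟩
      · rw [SimpleGraph.Walk.isPath_def]
        have h1v : (1 : G) ≠ v := fun hh => hv hh.symm
        simp [List.nodup_cons, hu, huv, h1v]
      · have e2 : zeta G s(u, 1) = ccol G u := by rw [zeta_mk, if_neg hu, if_pos rfl]
        have e3 : zeta G s((1 : G), v) = ccol G v := by rw [zeta_mk, if_pos rfl]
        simp only [SimpleGraph.Walk.edges_cons, SimpleGraph.Walk.edges_nil, List.map_cons,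
          List.map_nil, e2, e3]
        simp [List.nodup_cons, hcc]

end Graph
theorem rc_powerGraph_eq_three_of_nonunique_prime_subgroup
    (G : Type*) [Group G] [Fintype G] (hnc : ¬ IsCyclic G)
    (hno : ∀ x : G, ¬ IsMaximalInvolution x)
    (h : ∃ p : ℕ, p.Prime ∧ p ∣ Fintype.card G ∧
      ∃ H K : Subgroup G, H ≠ K ∧ Nat.card H = p ∧ Nat.card K = p) :
    rainbowConnection (powerGraph G) = 3 := by
  obtain ⟨p, hp, hdvd, H, K, hne, hH, hK⟩ := h
  obtain ⟨L, hL, hLH, hLK⟩ := exists_third_subgroup hp hdvd hne hH hK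
  obtain ⟨x, hx1, hxz, hxo⟩ := exists_generator_of_card_prime hp hH
  obtain ⟨y, hy1, hyz, hyo⟩ := exists_generator_of_card_prime hp hK
  obtain ⟨z, hz1, hzz, hzo⟩ := exists_generator_of_card_prime hp hL
  have hxy : Subgroup.zpowers x ≠ Subgroup.zpowers y := by rw [hxz, hyz]; exact hne
  have hyz' : Subgroup.zpowers y ≠ Subgroup.zpowers z := by
    rw [hyz, hzz]; exact fun hh => hLK hh.symm
  have hxz' : Subgroup.zpowers x ≠ Subgroup.zpowers z := by
    rw [hxz, hzz]; exact fun hh => hLH hh.symm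
  have hmem : 3 ∈ {k : ℕ | ∃ ζ : Sym2 G → Fin k, IsRainbowColoring (powerGraph G) ζ} :=
    ⟨zeta G, rc_upper hno⟩
  apply le_antisymm
  · exact Nat.sInf_le hmem
  · apply le_csInf ⟨3, hmem⟩
    rintro k ⟨ζ, hζ⟩
    exact rc_lower_bound hp hxo hyo hzo hxy hyz' hxz' ζ hζ
end
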